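/- arXiv:0704.3002 — 4 statements merged into one kernel-verified Lean document; each statement's English description precedes it below -/
import Mathlib

section
/- The canonical projection τ_n : Br_n → Σ_n sending σ_i to the transposition s_i = (i, i+1) admits a unique set-theoretic section r : Σ_n → Br_n such that r(s_i) = σ_i for all i and r(xy) = r(x)·r(y) whenever |xy| = |x| + |y|, where |·| denotes word length in the generators s_1,...,s_{n-1}. -/
/-- The set of braid relators in the free group on `m` generators `σ_1, …, σ_m`
(so the braid group on `m+1` strands). -/
def braidRelsSet (m : ℕ) : Set (FreeGroup (Fin m)) :=
  {w | (∃ i j : Fin m, (i : ℕ) + 1 < (j : ℕ) ∧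
          w = .of i * .of j * (.of i)⁻¹ * (.of j)⁻¹) ∨
       (∃ i j : Fin m, (i : ℕ) + 1 = (j : ℕ) ∧
          w = .of i * .of j * .of i * (.of j * .of i * .of j)⁻¹)}

/-- The braid group `Br_n` on `n` strands, with the Artin presentation on
generators `σ_1, …, σ_{n-1}`. -/
def BraidGroup (n : ℕ) : Type := PresentedGroup (braidRelsSet (n - 1))

instance (n : ℕ) : Group (BraidGroup n) := by unfold BraidGroup; infer_instance

/-- The Artin generator `σ_{i+1}` (`0`-based index `i`) of the braid group. -/
def braidGen (n : ℕ) (i : Fin (n - 1)) : BraidGroup n := PresentedGroup.of i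

/-- The adjacent transposition `s_{i+1} = ((i+1), (i+2))` (0-based: swaps `i`
and `i+1`) in the symmetric group `Σ_n`. -/
def adjTrans (n : ℕ) (i : Fin (n - 1)) : Equiv.Perm (Fin n) :=
  Equiv.swap ⟨(i : ℕ), by have := i.isLt; omega⟩ ⟨(i : ℕ) + 1, by have := i.isLt; omega⟩

/-- The word length of a permutation with respect to the adjacent
transpositions `s_1, …, s_{n-1}`. -/
noncomputable def permLength (n : ℕ) (x : Equiv.Perm (Fin n)) : ℕ :=
  sInf {k | ∃ l : List (Fin (n - 1)), l.length = k ∧ (l.map (adjTrans n)).prod = x}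

namespace BSec
variable {n : ℕ}

def loF {n : ℕ} (i : Fin (n-1)) : Fin n := ⟨(i : ℕ), by have := i.isLt; omega⟩
def hiF {n : ℕ} (i : Fin (n-1)) : Fin n := ⟨(i : ℕ) + 1, by have := i.isLt; omega⟩
@[simp] lemma loF_val (i : Fin (n-1)) : ((loF i : Fin n) : ℕ) = i := rfl
@[simp] lemma hiF_val (i : Fin (n-1)) : ((hiF i : Fin n) : ℕ) = (i : ℕ) + 1 := rfl
lemma adjTrans_eq (i : Fin (n-1)) : adjTrans n i = Equiv.swap (loF i) (hiF i) := rfl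
def F (i a : ℕ) : ℕ := if a = i then i + 1 else if a = i + 1 then i else a
lemma adj_val (i : Fin (n-1)) (x : Fin n) : ((adjTrans n i x : Fin n) : ℕ) = F (i : ℕ) (x : ℕ) := by
  rw [adjTrans_eq, Equiv.swap_apply_def, F]
  split_ifs with h1 h2 h3 h4 h5 h6 <;> simp_all [Fin.ext_iff]

lemma adj_mul_adj_mul (i : Fin (n-1)) (w : Equiv.Perm (Fin n)) :
    adjTrans n i * (adjTrans n i * w) = w := by
  rw [← mul_assoc, adjTrans_eq, Equiv.swap_mul_self, one_mul]

lemma perm_eq_inv_iff {w : Equiv.Perm (Fin n)} {x y : Fin n} : x = w⁻¹ y ↔ w x = y := by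
  constructor
  · rintro rfl; exact w.apply_symm_apply y
  · rintro rfl; exact (w.symm_apply_apply x).symm

def invSet (w : Equiv.Perm (Fin n)) : Finset (Fin n × Fin n) :=
  Finset.univ.filter (fun p => p.1 < p.2 ∧ w p.2 < w p.1)

def invCount (w : Equiv.Perm (Fin n)) : ℕ := (invSet w).card

lemma mem_invSet {w : Equiv.Perm (Fin n)} {p : Fin n × Fin n} :
    p ∈ invSet w ↔ p.1 < p.2 ∧ w p.2 < w p.1 := by
  simp [invSet]

lemma invCount_asc (i : Fin (n-1)) (w : Equiv.Perm (Fin n))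
    (h : w⁻¹ (loF i) < w⁻¹ (hiF i)) :
    invCount (adjTrans n i * w) = invCount w + 1 := by
  set a := w⁻¹ (loF i) with ha
  set b := w⁻¹ (hiF i) with hb
  have hwa : w a = loF i := w.apply_symm_apply _
  have hwb : w b = hiF i := w.apply_symm_apply _
  have hab : (a : ℕ) < (b : ℕ) := h
  have hq : (a, b) ∉ invSet w := by
    rw [mem_invSet]
    simp only [hwa, hwb, Fin.lt_def, loF_val, hiF_val]
    omega
  have hset : invSet (adjTrans n i * w) = insert (a, b) (invSet w) := by
    ext p
    have e1 : (p.1 : ℕ) = (a : ℕ) ↔ ((w p.1 : Fin n) : ℕ) = (i : ℕ) := by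
      rw [← Fin.ext_iff, ha, perm_eq_inv_iff, Fin.ext_iff, loF_val]
    have e2 : (p.2 : ℕ) = (b : ℕ) ↔ ((w p.2 : Fin n) : ℕ) = (i : ℕ) + 1 := by
      rw [← Fin.ext_iff, hb, perm_eq_inv_iff, Fin.ext_iff, hiF_val]
    have e3 : (p.1 : ℕ) = (b : ℕ) ↔ ((w p.1 : Fin n) : ℕ) = (i : ℕ) + 1 := by
      rw [← Fin.ext_iff, hb, perm_eq_inv_iff, Fin.ext_iff, hiF_val]
    have e4 : (p.2 : ℕ) = (a : ℕ) ↔ ((w p.2 : Fin n) : ℕ) = (i : ℕ) := by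
      rw [← Fin.ext_iff, ha, perm_eq_inv_iff, Fin.ext_iff, loF_val]
    have einj : (p.1 : ℕ) = (p.2 : ℕ) ↔ ((w p.1 : Fin n) : ℕ) = ((w p.2 : Fin n) : ℕ) := by
      rw [← Fin.ext_iff, ← Fin.ext_iff, w.injective.eq_iff]
    simp only [Finset.mem_insert, mem_invSet, Prod.ext_iff, Fin.lt_def, Fin.ext_iff,
      Equiv.Perm.mul_apply, adj_val]
    revert e1 e2 e3 e4 einj hab
    generalize ((w p.1 : Fin n) : ℕ) = x
    generalize ((w p.2 : Fin n) : ℕ) = y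
    intros
    unfold F
    split_ifs <;> omega
  rw [invCount, invCount, hset, Finset.card_insert_of_notMem hq]

lemma inv_lo_ne_hi (i : Fin (n-1)) (w : Equiv.Perm (Fin n)) :
    w⁻¹ (loF i) ≠ w⁻¹ (hiF i) := by
  intro h
  have := w⁻¹.injective h
  rw [Fin.ext_iff] at this
  simp at this

lemma invCount_desc (i : Fin (n-1)) (w : Equiv.Perm (Fin n))
    (h : w⁻¹ (hiF i) < w⁻¹ (loF i)) :
    invCount w = invCount (adjTrans n i * w) + 1 := by
  have key := invCount_asc i (adjTrans n i * w) ?_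
  · rwa [← mul_assoc, adjTrans_eq, Equiv.swap_mul_self, one_mul] at key
  · rw [mul_inv_rev, adjTrans_eq, Equiv.swap_inv, Equiv.Perm.mul_apply, Equiv.Perm.mul_apply,
      Equiv.swap_apply_left, Equiv.swap_apply_right]
    exact h

def WordProd (l : List (Fin (n-1))) : Equiv.Perm (Fin n) := (l.map (adjTrans n)).prod

@[simp] lemma WordProd_nil : WordProd ([] : List (Fin (n-1))) = 1 := rfl

lemma WordProd_cons (i : Fin (n-1)) (l : List (Fin (n-1))) :
    WordProd (i :: l) = adjTrans n i * WordProd l := by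
  simp [WordProd]

lemma WordProd_append (l l' : List (Fin (n-1))) :
    WordProd (l ++ l') = WordProd l * WordProd l' := by
  simp [WordProd]

lemma invCount_le_length (l : List (Fin (n-1))) : invCount (WordProd l) ≤ l.length := by
  induction l with
  | nil =>
    simp only [WordProd_nil, List.length_nil, Nat.le_zero, invCount, Finset.card_eq_zero,
      Finset.eq_empty_iff_forall_notMem]
    intro p hp
    rw [mem_invSet] at hp
    simp only [Equiv.Perm.one_apply] at hp
    exact absurd hp.2 (not_lt.2 (le_of_lt hp.1))
  | cons i l ih =>
    rw [WordProd_cons, List.length_cons]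
    rcases lt_or_gt_of_ne (inv_lo_ne_hi i (WordProd l)) with h | h
    · rw [invCount_asc i _ h]; omega
    · have := invCount_desc i (WordProd l) h
      omega

lemma eq_one_of_invCount_zero {w : Equiv.Perm (Fin n)} (h : invCount w = 0) : w = 1 := by
  have hmono : StrictMono (w : Fin n → Fin n) := by
    intro x y hxy
    rcases lt_trichotomy (w x) (w y) with h' | h' | h'
    · exact h'
    · exact absurd (w.injective h') (ne_of_lt hxy)
    · exfalso
      have : (x, y) ∈ invSet w := mem_invSet.2 ⟨hxy, h'⟩
      rw [invCount, Finset.card_eq_zero] at h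
      simp [h] at this
  have hr : Set.range (w : Fin n → Fin n) = Set.range (id : Fin n → Fin n) := by
    rw [Set.range_id]
    exact Set.range_eq_univ.2 w.surjective
  have inst : WellFoundedLT (Fin n) := inferInstance
  have : (w : Fin n → Fin n) = id :=
    (@StrictMono.range_inj (Fin n) (Fin n) _ _ inst _ _ hmono strictMono_id).1 hr
  exact Equiv.ext fun x => congrFun this x

lemma exists_desc {w : Equiv.Perm (Fin n)} (hw : w ≠ 1) :
    ∃ i : Fin (n-1), w⁻¹ (hiF i) < w⁻¹ (loF i) := by
  by_contra hcon
  push_neg at hcon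
  have hadj : ∀ a b : Fin n, (b : ℕ) = (a : ℕ) + 1 → w⁻¹ a < w⁻¹ b := by
    intro a b hab
    have hlt : (a : ℕ) < n - 1 := by have := b.isLt; omega
    have ha' : a = loF ⟨(a : ℕ), hlt⟩ := Fin.ext rfl
    have hb' : b = hiF ⟨(a : ℕ), hlt⟩ := Fin.ext (by simp [hab])
    rw [ha', hb']
    rcases lt_or_gt_of_ne (inv_lo_ne_hi ⟨(a : ℕ), hlt⟩ w) with h | h
    · exact h
    · exact absurd h (not_lt.2 (hcon _))
  have hmono : ∀ d : ℕ, ∀ a b : Fin n, (b : ℕ) = (a : ℕ) + 1 + d → w⁻¹ a < w⁻¹ b := by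
    intro d
    induction d with
    | zero => intro a b hab; exact hadj a b (by omega)
    | succ d ih =>
      intro a b hab
      have hcn : (a : ℕ) + 1 + d < n := by have := b.isLt; omega
      exact lt_trans (ih a ⟨(a : ℕ) + 1 + d, hcn⟩ rfl) (hadj _ b (by simp [hab]; omega))
  have hsm : StrictMono (fun x => w⁻¹ x : Fin n → Fin n) := by
    intro a b hab
    rw [Fin.lt_def] at hab
    exact hmono ((b : ℕ) - (a : ℕ) - 1) a b (by omega)
  have : w⁻¹ = 1 := by
    have hr : Set.range (fun x => w⁻¹ x : Fin n → Fin n) = Set.range (id : Fin n → Fin n) := by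
      rw [Set.range_id]
      exact Set.range_eq_univ.2 w⁻¹.surjective
    have inst : WellFoundedLT (Fin n) := inferInstance
    have := (@StrictMono.range_inj (Fin n) (Fin n) _ _ inst _ _ hsm strictMono_id).1 hr
    exact Equiv.ext fun x => congrFun this x
  exact hw (by simpa using congrArg (·⁻¹) this)

lemma exists_word_aux : ∀ (N : ℕ) (w : Equiv.Perm (Fin n)), invCount w ≤ N →
    ∃ l : List (Fin (n-1)), l.length = invCount w ∧ WordProd l = w := by
  intro N
  induction N with
  | zero =>
    intro w hle
    have h0 : invCount w = 0 := by omega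
    exact ⟨[], by simp [h0], by rw [WordProd_nil, (eq_one_of_invCount_zero h0)]⟩
  | succ N ih =>
    intro w hle
    by_cases hw : w = 1
    · subst hw
      have h1 : invCount (1 : Equiv.Perm (Fin n)) = 0 := by
        simpa [Nat.le_zero] using invCount_le_length (n := n) []
      exact ⟨[], by simp [h1], WordProd_nil⟩
    · obtain ⟨i, hi⟩ := exists_desc hw
      have hc := invCount_desc i w hi
      obtain ⟨l, hl, hp⟩ := ih (adjTrans n i * w) (by omega)
      refine ⟨i :: l, by rw [List.length_cons, hl]; omega, ?_⟩
      rw [WordProd_cons, hp, ← mul_assoc, adjTrans_eq, Equiv.swap_mul_self, one_mul]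

lemma exists_word (w : Equiv.Perm (Fin n)) :
    ∃ l : List (Fin (n-1)), l.length = invCount w ∧ WordProd l = w :=
  exists_word_aux (invCount w) w le_rfl

lemma permLength_le_of_word {l : List (Fin (n-1))} {w : Equiv.Perm (Fin n)}
    (h : WordProd l = w) : permLength n w ≤ l.length :=
  Nat.sInf_le ⟨l, rfl, h⟩

lemma permLength_eq_invCount (w : Equiv.Perm (Fin n)) : permLength n w = invCount w := by
  apply le_antisymm
  · obtain ⟨l, hl, hp⟩ := exists_word w
    calc permLength n w ≤ l.length := permLength_le_of_word hp
    _ = invCount w := hl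
  · apply le_csInf
    · obtain ⟨l, hl, hp⟩ := exists_word w
      exact ⟨l.length, l, rfl, hp⟩
    · rintro k ⟨l, rfl, hp⟩
      have hp' : WordProd l = w := hp
      rw [← hp']
      exact invCount_le_length l

lemma permLength_one : permLength n (1 : Equiv.Perm (Fin n)) = 0 := by
  rw [permLength_eq_invCount]
  simpa [Nat.le_zero] using invCount_le_length (n := n) []

lemma eq_one_of_permLength_zero {w : Equiv.Perm (Fin n)} (h : permLength n w = 0) : w = 1 :=
  eq_one_of_invCount_zero (by rwa [permLength_eq_invCount] at h)

/-- descent predicate -/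
def Desc (i : Fin (n-1)) (w : Equiv.Perm (Fin n)) : Prop := w⁻¹ (hiF i) < w⁻¹ (loF i)

lemma len_asc {i : Fin (n-1)} {w : Equiv.Perm (Fin n)} (h : ¬ Desc i w) :
    permLength n (adjTrans n i * w) = permLength n w + 1 := by
  rcases lt_or_gt_of_ne (inv_lo_ne_hi i w) with h' | h'
  · rw [permLength_eq_invCount, permLength_eq_invCount]
    exact invCount_asc i w h'
  · exact absurd h' h

lemma len_desc {i : Fin (n-1)} {w : Equiv.Perm (Fin n)} (h : Desc i w) :
    permLength n w = permLength n (adjTrans n i * w) + 1 := by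
  rw [permLength_eq_invCount, permLength_eq_invCount]
  exact invCount_desc i w h

/-- reduced words -/
def IsRed (l : List (Fin (n-1))) (w : Equiv.Perm (Fin n)) : Prop :=
  WordProd l = w ∧ l.length = permLength n w

lemma exists_isRed (w : Equiv.Perm (Fin n)) : ∃ l, IsRed l w := by
  obtain ⟨l, hl, hp⟩ := exists_word w
  exact ⟨l, hp, by rw [hl, permLength_eq_invCount]⟩

lemma isRed_tail {i : Fin (n-1)} {l : List (Fin (n-1))} {w : Equiv.Perm (Fin n)}
    (h : IsRed (i :: l) w) : Desc i w ∧ IsRed l (adjTrans n i * w) := by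
  obtain ⟨hp, hl⟩ := h
  rw [List.length_cons] at hl
  have hwl : WordProd l = adjTrans n i * w := by
    rw [← hp, WordProd_cons, adj_mul_adj_mul]
  have hle : permLength n (adjTrans n i * w) ≤ l.length := permLength_le_of_word hwl
  have hdesc : Desc i w := by
    by_contra hnd
    have := len_asc hnd
    omega
  refine ⟨hdesc, hwl, ?_⟩
  have := len_desc hdesc
  omega

lemma isRed_cons {i : Fin (n-1)} {l : List (Fin (n-1))} {w : Equiv.Perm (Fin n)}
    (hd : Desc i w) (h : IsRed l (adjTrans n i * w)) : IsRed (i :: l) w := by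
  obtain ⟨hp, hl⟩ := h
  refine ⟨by rw [WordProd_cons, hp, adj_mul_adj_mul], ?_⟩
  have := len_desc hd
  rw [List.length_cons]
  omega

lemma adj_inv (i : Fin (n-1)) : (adjTrans n i)⁻¹ = adjTrans n i := by
  rw [adjTrans_eq]; exact Equiv.swap_inv _ _

lemma adj_fix (i : Fin (n-1)) (x : Fin n) (h1 : (x:ℕ) ≠ i) (h2 : (x:ℕ) ≠ (i:ℕ)+1) :
    adjTrans n i x = x := by
  apply Fin.ext; rw [adj_val, F]; simp [h1, h2]

lemma adj_lo (i : Fin (n-1)) : adjTrans n i (loF i) = hiF i := by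
  rw [adjTrans_eq]; exact Equiv.swap_apply_left _ _

lemma adj_hi (i : Fin (n-1)) : adjTrans n i (hiF i) = loF i := by
  rw [adjTrans_eq]; exact Equiv.swap_apply_right _ _

lemma inv_adj_mul (j : Fin (n-1)) (w : Equiv.Perm (Fin n)) (x : Fin n) :
    (adjTrans n j * w)⁻¹ x = w⁻¹ (adjTrans n j x) := by
  rw [mul_inv_rev, adj_inv, Equiv.Perm.mul_apply]

lemma hiF_eq_loF {i j : Fin (n-1)} (hij : (i:ℕ)+1 = (j:ℕ)) : (hiF i : Fin n) = loF j :=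
  Fin.ext (by simp [hij])

lemma desc_comm {i j : Fin (n-1)} {w : Equiv.Perm (Fin n)}
    (h : (i:ℕ)+1 < (j:ℕ) ∨ (j:ℕ)+1 < (i:ℕ)) (hdi : Desc i w) :
    Desc i (adjTrans n j * w) := by
  unfold Desc at *
  rw [inv_adj_mul, inv_adj_mul, adj_fix j (loF i) (by simp; omega) (by simp; omega),
    adj_fix j (hiF i) (by simp; omega) (by simp; omega)]
  exact hdi

lemma desc_e3a {i j : Fin (n-1)} {w : Equiv.Perm (Fin n)} (hij : (i:ℕ)+1 = (j:ℕ))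
    (hdi : Desc i w) (hdj : Desc j w) : Desc i (adjTrans n j * w) := by
  unfold Desc at *
  rw [inv_adj_mul, inv_adj_mul, adj_fix j (loF i) (by simp; omega) (by simp; omega),
    hiF_eq_loF hij, adj_lo]
  calc w⁻¹ (hiF j) < w⁻¹ (loF j) := hdj
    _ = w⁻¹ (hiF i) := by rw [hiF_eq_loF hij]
    _ < w⁻¹ (loF i) := hdi

lemma desc_e3b {i j : Fin (n-1)} {w : Equiv.Perm (Fin n)} (hij : (i:ℕ)+1 = (j:ℕ))
    (hdi : Desc i w) (hdj : Desc j w) :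
    Desc j (adjTrans n i * (adjTrans n j * w)) := by
  unfold Desc at *
  rw [inv_adj_mul, inv_adj_mul, inv_adj_mul, inv_adj_mul,
    show adjTrans n i (loF j) = loF i by rw [← hiF_eq_loF hij, adj_hi],
    adj_fix j (loF i) (by simp; omega) (by simp; omega),
    adj_fix i (hiF j) (by simp; omega) (by simp; omega),
    show adjTrans n j (hiF j) = hiF i by rw [adj_hi, hiF_eq_loF hij]]
  exact hdi

lemma desc_e3c {i j : Fin (n-1)} {w : Equiv.Perm (Fin n)} (hij : (i:ℕ)+1 = (j:ℕ))
    (hdi : Desc i w) (hdj : Desc j w) : Desc j (adjTrans n i * w) := by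
  unfold Desc at *
  rw [inv_adj_mul, inv_adj_mul,
    show adjTrans n i (loF j) = loF i by rw [← hiF_eq_loF hij, adj_hi],
    adj_fix i (hiF j) (by simp; omega) (by simp; omega)]
  calc w⁻¹ (hiF j) < w⁻¹ (loF j) := hdj
    _ = w⁻¹ (hiF i) := by rw [hiF_eq_loF hij]
    _ < w⁻¹ (loF i) := hdi

lemma desc_e3d {i j : Fin (n-1)} {w : Equiv.Perm (Fin n)} (hij : (i:ℕ)+1 = (j:ℕ))
    (hdi : Desc i w) (hdj : Desc j w) :
    Desc i (adjTrans n j * (adjTrans n i * w)) := by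
  unfold Desc at *
  rw [inv_adj_mul, inv_adj_mul, inv_adj_mul, inv_adj_mul,
    adj_fix j (loF i) (by simp; omega) (by simp; omega), adj_lo,
    show adjTrans n j (hiF i) = hiF j by rw [hiF_eq_loF hij, adj_lo],
    adj_fix i (hiF j) (by simp; omega) (by simp; omega)]
  calc w⁻¹ (hiF j) < w⁻¹ (loF j) := hdj
    _ = w⁻¹ (hiF i) := by rw [hiF_eq_loF hij]

lemma F_comm {i j a : ℕ} (h : i+1 < j ∨ j+1 < i) : F i (F j a) = F j (F i a) := by
  unfold F; split_ifs <;> omega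

set_option maxHeartbeats 1000000 in
lemma F_braid {i j a : ℕ} (hij : i+1 = j) : F i (F j (F i a)) = F j (F i (F j a)) := by
  subst hij; unfold F; split_ifs <;> omega

lemma perm_rel2 {i j : Fin (n-1)} (h : (i:ℕ)+1 < (j:ℕ) ∨ (j:ℕ)+1 < (i:ℕ)) :
    adjTrans n i * adjTrans n j = adjTrans n j * adjTrans n i := by
  ext x
  simp only [Equiv.Perm.mul_apply]
  rw [adj_val, adj_val, adj_val, adj_val]
  exact F_comm h

lemma perm_rel3 {i j : Fin (n-1)} (hij : (i:ℕ)+1 = (j:ℕ)) :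
    adjTrans n i * adjTrans n j * adjTrans n i = adjTrans n j * adjTrans n i * adjTrans n j := by
  ext x
  simp only [Equiv.Perm.mul_apply]
  rw [adj_val, adj_val, adj_val, adj_val, adj_val, adj_val]
  exact F_braid hij

lemma mk_rel_one {r : FreeGroup (Fin (n-1))} (hr : r ∈ braidRelsSet (n-1)) :
    (PresentedGroup.mk (braidRelsSet (n-1)) r : BraidGroup n) = 1 :=
  (QuotientGroup.eq_one_iff r).mpr (Subgroup.subset_normalClosure hr)

lemma braidGen_eq (i : Fin (n-1)) :
    braidGen n i = PresentedGroup.mk (braidRelsSet (n-1)) (FreeGroup.of i) := rfl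

lemma brel2 {i j : Fin (n-1)} (h : (i:ℕ)+1 < (j:ℕ)) :
    braidGen n i * braidGen n j = braidGen n j * braidGen n i := by
  have h1 := mk_rel_one (n := n) (Or.inl ⟨i, j, h, rfl⟩)
  simp only [map_mul, map_inv] at h1
  rw [← braidGen_eq, ← braidGen_eq] at h1
  change (braidGen n i * braidGen n j * (braidGen n i)⁻¹ * (braidGen n j)⁻¹ : BraidGroup n) = 1 at h1
  rw [mul_inv_eq_one, mul_inv_eq_iff_eq_mul] at h1
  exact h1

lemma brel2' {i j : Fin (n-1)} (h : (i:ℕ)+1 < (j:ℕ) ∨ (j:ℕ)+1 < (i:ℕ)) :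
    braidGen n i * braidGen n j = braidGen n j * braidGen n i := by
  rcases h with h | h
  · exact brel2 h
  · exact (brel2 h).symm

lemma brel3 {i j : Fin (n-1)} (h : (i:ℕ)+1 = (j:ℕ)) :
    braidGen n i * braidGen n j * braidGen n i = braidGen n j * braidGen n i * braidGen n j := by
  have h1 := mk_rel_one (n := n) (Or.inr ⟨i, j, h, rfl⟩)
  simp only [map_mul, map_inv] at h1
  rw [← braidGen_eq, ← braidGen_eq] at h1
  rw [mul_inv_eq_one] at h1
  exact h1

def braidWord (l : List (Fin (n-1))) : BraidGroup n := (l.map (braidGen n)).prod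

@[simp] lemma braidWord_nil : braidWord ([] : List (Fin (n-1))) = (1 : BraidGroup n) := rfl

lemma braidWord_cons (i : Fin (n-1)) (l : List (Fin (n-1))) :
    braidWord (i :: l) = braidGen n i * braidWord l := by
  simp [braidWord]

lemma braidWord_append (l l' : List (Fin (n-1))) :
    braidWord (l ++ l') = (braidWord l * braidWord l' : BraidGroup n) := by
  simp [braidWord]

lemma tau_rels : ∀ r ∈ braidRelsSet (n-1), FreeGroup.lift (adjTrans n) r = 1 := by
  rintro r (⟨i, j, hij, rfl⟩ | ⟨i, j, hij, rfl⟩)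
  · simp only [map_mul, map_inv, FreeGroup.lift_apply_of]
    rw [mul_inv_eq_one, mul_inv_eq_iff_eq_mul]
    exact perm_rel2 (Or.inl hij)
  · simp only [map_mul, map_inv, FreeGroup.lift_apply_of]
    rw [mul_inv_eq_one]
    exact perm_rel3 hij

def tauHom (n : ℕ) : BraidGroup n →* Equiv.Perm (Fin n) := PresentedGroup.toGroup tau_rels

@[simp] lemma tauHom_gen (i : Fin (n-1)) : tauHom n (braidGen n i) = adjTrans n i :=
  PresentedGroup.toGroup.of tau_rels

lemma tauHom_braidWord (l : List (Fin (n-1))) : tauHom n (braidWord l) = WordProd l := by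
  induction l with
  | nil => simp [WordProd]
  | cons i l ih => rw [braidWord_cons, WordProd_cons, map_mul, tauHom_gen, ih]

lemma len_lt_of_isRed_cons {i : Fin (n-1)} {u' : List (Fin (n-1))} {w : Equiv.Perm (Fin n)}
    {N : ℕ} (hu : IsRed (i :: u') w) (hN : permLength n w = N) :
    permLength n (adjTrans n i * w) < N := by
  have h1 := hu.2
  have h2 := (isRed_tail hu).2.2
  rw [List.length_cons] at h1
  omega

lemma matsumoto_aux : ∀ (N : ℕ), ∀ (w : Equiv.Perm (Fin n)) (u v : List (Fin (n-1))),
    permLength n w = N → IsRed u w → IsRed v w → braidWord u = braidWord v := by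
  intro N
  induction N using Nat.strong_induction_on with
  | _ N ih =>
    have IH2 : ∀ w' : Equiv.Perm (Fin n), permLength n w' < N →
        ∀ u v : List (Fin (n-1)), IsRed u w' → IsRed v w' → braidWord u = braidWord v :=
      fun w' h u v hu hv => ih (permLength n w') h w' u v rfl hu hv
    intro w u v hN hu hv
    cases u with
    | nil =>
      have h0 : permLength n w = 0 := by
        have := hu.2; simpa using this.symm
      have : v.length = 0 := by rw [hv.2, h0]
      rw [List.length_eq_zero_iff.mp this]
    | cons i u' =>
      cases v with
      | nil =>
        have h0 : permLength n w = 0 := by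
          have := hv.2; simpa using this.symm
        have := hu.2
        rw [List.length_cons, h0] at this
        omega
      | cons j v' =>
        obtain ⟨hdi, hui⟩ := isRed_tail hu
        obtain ⟨hdj, hvj⟩ := isRed_tail hv
        have hleni : permLength n (adjTrans n i * w) < N := len_lt_of_isRed_cons hu hN
        have hlenj : permLength n (adjTrans n j * w) < N := len_lt_of_isRed_cons hv hN
        by_cases hij : i = j
        · subst hij
          rw [braidWord_cons, braidWord_cons, IH2 _ hleni u' v' hui hvj]
        · have hij' : (i:ℕ) ≠ (j:ℕ) := fun h => hij (Fin.ext h)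
          have hcase : ((i:ℕ)+1 < (j:ℕ) ∨ (j:ℕ)+1 < (i:ℕ)) ∨
              ((i:ℕ)+1 = (j:ℕ) ∨ (j:ℕ)+1 = (i:ℕ)) := by omega
          rcases hcase with hcomm | hadjc
          · -- commuting case
            have hdij : Desc i (adjTrans n j * w) := desc_comm hcomm hdi
            have hdji : Desc j (adjTrans n i * w) := desc_comm (Or.symm hcomm) hdj
            obtain ⟨z, hz⟩ := exists_isRed (adjTrans n i * (adjTrans n j * w))
            have hA : IsRed (j :: i :: z) w := isRed_cons hdj (isRed_cons hdij hz)
            have hswap : adjTrans n i * (adjTrans n j * w) =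
                adjTrans n j * (adjTrans n i * w) := by
              rw [← mul_assoc, ← mul_assoc, perm_rel2 hcomm]
            have hz' : IsRed z (adjTrans n j * (adjTrans n i * w)) := by rwa [hswap] at hz
            have hB : IsRed (i :: j :: z) w := isRed_cons hdi (isRed_cons hdji hz')
            have e1 : braidWord u' = braidWord (j :: z) :=
              IH2 _ hleni u' (j :: z) hui (isRed_tail hB).2
            have e2 : braidWord v' = braidWord (i :: z) :=
              IH2 _ hlenj v' (i :: z) hvj (isRed_tail hA).2
            rw [braidWord_cons, braidWord_cons, e1, e2, braidWord_cons, braidWord_cons,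
              ← mul_assoc, ← mul_assoc, brel2' hcomm]
          · -- adjacent case
            have key : ∀ (i j : Fin (n-1)) (u' v' : List (Fin (n-1))),
                (i:ℕ)+1 = (j:ℕ) → IsRed (i :: u') w → IsRed (j :: v') w →
                braidWord (i :: u') = braidWord (j :: v') := by
              intro i j u' v' hij hu hv
              obtain ⟨hdi, hui⟩ := isRed_tail hu
              obtain ⟨hdj, hvj⟩ := isRed_tail hv
              have hleni : permLength n (adjTrans n i * w) < N := len_lt_of_isRed_cons hu hN
              have hlenj : permLength n (adjTrans n j * w) < N := len_lt_of_isRed_cons hv hN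
              have d1 : Desc j (adjTrans n i * w) := desc_e3c hij hdi hdj
              have d2 : Desc i (adjTrans n j * (adjTrans n i * w)) := desc_e3d hij hdi hdj
              have d3 : Desc i (adjTrans n j * w) := desc_e3a hij hdi hdj
              have d4 : Desc j (adjTrans n i * (adjTrans n j * w)) := desc_e3b hij hdi hdj
              obtain ⟨z, hz⟩ :=
                exists_isRed (adjTrans n i * (adjTrans n j * (adjTrans n i * w)))
              have hA : IsRed (i :: j :: i :: z) w :=
                isRed_cons hdi (isRed_cons d1 (isRed_cons d2 hz))
              have hbr : adjTrans n i * (adjTrans n j * (adjTrans n i * w)) =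
                  adjTrans n j * (adjTrans n i * (adjTrans n j * w)) := by
                rw [← mul_assoc, ← mul_assoc, ← mul_assoc, ← mul_assoc, perm_rel3 hij]
              have hz' : IsRed z (adjTrans n j * (adjTrans n i * (adjTrans n j * w))) := by
                rwa [hbr] at hz
              have hB : IsRed (j :: i :: j :: z) w :=
                isRed_cons hdj (isRed_cons d3 (isRed_cons d4 hz'))
              have e1 : braidWord u' = braidWord (j :: i :: z) :=
                IH2 _ hleni u' _ hui (isRed_tail hA).2
              have e2 : braidWord v' = braidWord (i :: j :: z) :=
                IH2 _ hlenj v' _ hvj (isRed_tail hB).2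
              rw [braidWord_cons, braidWord_cons, e1, e2, braidWord_cons, braidWord_cons,
                braidWord_cons, braidWord_cons, ← mul_assoc, ← mul_assoc, ← mul_assoc,
                ← mul_assoc, brel3 hij]
            rcases hadjc with h | h
            · exact key i j u' v' h hu hv
            · exact (key j i v' u' h hv hu).symm

lemma matsumoto {w : Equiv.Perm (Fin n)} {u v : List (Fin (n-1))}
    (hu : IsRed u w) (hv : IsRed v w) : braidWord u = braidWord v :=
  matsumoto_aux (permLength n w) w u v rfl hu hv

noncomputable def rSec (n : ℕ) (w : Equiv.Perm (Fin n)) : BraidGroup n :=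
  braidWord (exists_isRed w).choose

lemma rSec_eq {w : Equiv.Perm (Fin n)} {l : List (Fin (n-1))} (hl : IsRed l w) :
    rSec n w = braidWord l :=
  matsumoto (exists_isRed w).choose_spec hl

lemma tau_rSec (w : Equiv.Perm (Fin n)) : tauHom n (rSec n w) = w := by
  rw [rSec, tauHom_braidWord]
  exact (exists_isRed w).choose_spec.1

lemma permLength_adj (i : Fin (n-1)) : permLength n (adjTrans n i) = 1 := by
  have hnd : ¬ Desc i (1 : Equiv.Perm (Fin n)) := by
    unfold Desc
    simp [Fin.lt_def]
  have := len_asc hnd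
  rwa [mul_one, permLength_one] at this

lemma isRed_single (i : Fin (n-1)) : IsRed [i] (adjTrans n i) := by
  constructor
  · simp [WordProd]
  · rw [List.length_singleton, permLength_adj]

lemma rSec_adj (i : Fin (n-1)) : rSec n (adjTrans n i) = braidGen n i := by
  rw [rSec_eq (isRed_single i)]
  simp [braidWord]

lemma rSec_mul {x y : Equiv.Perm (Fin n)}
    (h : permLength n (x * y) = permLength n x + permLength n y) :
    rSec n (x * y) = rSec n x * rSec n y := by
  obtain ⟨u, hu⟩ := exists_isRed x
  obtain ⟨v, hv⟩ := exists_isRed y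
  have huv : IsRed (u ++ v) (x * y) := by
    constructor
    · rw [WordProd_append, hu.1, hv.1]
    · rw [List.length_append, hu.2, hv.2, h]
  rw [rSec_eq huv, braidWord_append, ← rSec_eq hu, ← rSec_eq hv]

lemma rSec_one : rSec n 1 = (1 : BraidGroup n) := by
  have h1 : IsRed ([] : List (Fin (n-1))) (1 : Equiv.Perm (Fin n)) :=
    ⟨WordProd_nil, by rw [permLength_one]; rfl⟩
  rw [rSec_eq h1, braidWord_nil]

lemma rSec_unique (r' : Equiv.Perm (Fin n) → BraidGroup n)
    (h2 : ∀ i : Fin (n-1), r' (adjTrans n i) = braidGen n i)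
    (h3 : ∀ x y : Equiv.Perm (Fin n),
      permLength n (x * y) = permLength n x + permLength n y → r' (x * y) = r' x * r' y) :
    r' = rSec n := by
  have hone : r' 1 = 1 := by
    have := h3 1 1 (by rw [mul_one, permLength_one])
    rw [mul_one] at this
    have h' : r' 1 * 1 = r' 1 * r' 1 := by rw [mul_one, ← this]
    exact (mul_left_cancel h').symm
  funext w
  suffices H : ∀ (N : ℕ) (w : Equiv.Perm (Fin n)), permLength n w = N → r' w = rSec n w from
    H (permLength n w) w rfl
  intro N
  induction N using Nat.strong_induction_on with
  | _ N ih =>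
    intro w hN
    obtain ⟨l, hl⟩ := exists_isRed w
    cases l with
    | nil =>
      have : w = 1 := by rw [← hl.1, WordProd_nil]
      subst this
      rw [hone, rSec_one]
    | cons i l' =>
      obtain ⟨hdi, hli⟩ := isRed_tail hl
      have hw : w = adjTrans n i * (adjTrans n i * w) := (adj_mul_adj_mul i w).symm
      have hlen : permLength n (adjTrans n i * (adjTrans n i * w)) =
          permLength n (adjTrans n i) + permLength n (adjTrans n i * w) := by
        rw [← hw, permLength_adj]
        have := len_desc hdi
        omega
      have hlt : permLength n (adjTrans n i * w) < N := len_lt_of_isRed_cons hl hN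
      calc r' w = r' (adjTrans n i * (adjTrans n i * w)) := by rw [← hw]
        _ = r' (adjTrans n i) * r' (adjTrans n i * w) := h3 _ _ hlen
        _ = braidGen n i * rSec n (adjTrans n i * w) := by
            rw [h2, ih _ hlt _ rfl]
        _ = braidGen n i * braidWord l' := by rw [rSec_eq hli]
        _ = braidWord (i :: l') := (braidWord_cons i l').symm
        _ = rSec n w := (rSec_eq hl).symm

end BSec

/-- The canonical projection `τ_n : Br_n → Σ_n`, `σ_i ↦ s_i`,
admits a unique set-theoretic section `r : Σ_n → Br_n` such that `r(s_i) = σ_i`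
for all `i` and `r(xy) = r(x)·r(y)` whenever `|xy| = |x| + |y|`. -/
theorem braidProjection_unique_section (n : ℕ) :
    ∃ τ : BraidGroup n →* Equiv.Perm (Fin n),
      (∀ i : Fin (n - 1), τ (braidGen n i) = adjTrans n i) ∧
      ∃! r : Equiv.Perm (Fin n) → BraidGroup n,
        (∀ x, τ (r x) = x) ∧
        (∀ i : Fin (n - 1), r (adjTrans n i) = braidGen n i) ∧
        ∀ x y : Equiv.Perm (Fin n),
          permLength n (x * y) = permLength n x + permLength n y →
            r (x * y) = r x * r y := by
  refine ⟨BSec.tauHom n, fun i => BSec.tauHom_gen i, BSec.rSec n, ?_, ?_⟩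
  · exact ⟨BSec.tau_rSec, BSec.rSec_adj, fun x y h => BSec.rSec_mul h⟩
  · rintro r' ⟨h1, h2, h3⟩
    exact BSec.rSec_unique r' h2 h3
end

section
/- Any two reduced (minimal-length) expressions for an element of the symmetric group Σ_n in the generators s_1,...,s_{n-1} can be transformed into each other using only the braid relations s_is_j = s_js_i for |i-j| > 1 and s_is_{i+1}s_i = s_{i+1}s_is_{i+1} (without using s_i^2 = 1). -/
/-- A single application of a braid relation (`s_i s_j = s_j s_i` for
`|i-j| > 1`, or `s_i s_{i+1} s_i = s_{i+1} s_i s_{i+1}`) inside a word in the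
generators `s_1, …, s_m` (letters are 0-based indices in `Fin m`). -/
inductive BraidMove (m : ℕ) : List (Fin m) → List (Fin m) → Prop
  | comm (u v : List (Fin m)) (i j : Fin m) (h : (i : ℕ) + 1 < (j : ℕ)) :
      BraidMove m (u ++ [i, j] ++ v) (u ++ [j, i] ++ v)
  | braid (u v : List (Fin m)) (i j : Fin m) (h : (i : ℕ) + 1 = (j : ℕ)) :
      BraidMove m (u ++ [i, j, i] ++ v) (u ++ [j, i, j] ++ v)

@[simp] theorem Equiv.Perm.apply_inv_self {α : Type*} (f : Equiv.Perm α) (x : α) :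
    f (f⁻¹ x) = x := f.apply_symm_apply x

@[simp] theorem Equiv.Perm.inv_apply_self {α : Type*} (f : Equiv.Perm α) (x : α) :
    f⁻¹ (f x) = x := f.symm_apply_apply x

namespace MatsumotoAux

def aF (n : ℕ) (i : Fin (n - 1)) : Fin n := ⟨(i : ℕ), by have := i.isLt; omega⟩
def bF (n : ℕ) (i : Fin (n - 1)) : Fin n := ⟨(i : ℕ) + 1, by have := i.isLt; omega⟩

lemma adjTrans_eq (n : ℕ) (i : Fin (n-1)) : adjTrans n i = Equiv.swap (aF n i) (bF n i) := rfl

lemma aF_ne_bF (n : ℕ) (i : Fin (n-1)) : aF n i ≠ bF n i := by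
  simp [aF, bF, Fin.ext_iff]

lemma adjTrans_mul_self (n : ℕ) (i : Fin (n-1)) : adjTrans n i * adjTrans n i = 1 :=
  Equiv.swap_mul_self _ _

lemma adjTrans_inv (n : ℕ) (i : Fin (n-1)) : (adjTrans n i)⁻¹ = adjTrans n i := by
  rw [adjTrans_eq]; exact Equiv.swap_inv _ _

/-- key order fact about adjacent swaps -/
lemma swap_lt_swap_iff {n : ℕ} (a b u v : Fin n) (hab : (a:ℕ) + 1 = (b:ℕ)) (huv : u ≠ v) :
    Equiv.swap a b v < Equiv.swap a b u ↔
      ((v < u ∨ (u = a ∧ v = b)) ∧ ¬(u = b ∧ v = a)) := by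
  have huv' : (u:ℕ) ≠ (v:ℕ) := fun h => huv (Fin.ext h)
  rcases eq_or_ne v a with hva|hva <;> rcases eq_or_ne v b with hvb|hvb <;>
    rcases eq_or_ne u a with hua|hua <;> rcases eq_or_ne u b with hub|hub <;>
    simp only [Equiv.swap_apply_def] <;> split_ifs <;>
    simp only [Fin.lt_def, Fin.ext_iff, ne_eq, not_and, not_or] at * <;> omega


open Finset in
/-- The set of inversions of a permutation. -/
def invSet (n : ℕ) (x : Equiv.Perm (Fin n)) : Finset (Fin n × Fin n) :=
  Finset.univ.filter fun p => p.1 < p.2 ∧ x p.2 < x p.1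

def nInv (n : ℕ) (x : Equiv.Perm (Fin n)) : ℕ := (invSet n x).card

lemma nInv_one (n : ℕ) : nInv n 1 = 0 := by
  simp only [nInv, invSet, Finset.card_eq_zero]
  ext p
  simp only [Finset.mem_filter, Finset.mem_univ, true_and, Finset.notMem_empty, iff_false,
    Equiv.Perm.one_apply, not_and]
  intro hp
  have h := (Finset.mem_filter.mp hp).2.1
  have h' := (Finset.mem_filter.mp hp).2.2
  exact absurd (h.trans h') (lt_irrefl _)

lemma step_lt (n : ℕ) (i : Fin (n-1)) (x : Equiv.Perm (Fin n))
    (h : x⁻¹ (aF n i) < x⁻¹ (bF n i)) :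
    nInv n (adjTrans n i * x) = nInv n x + 1 := by
  classical
  set a := aF n i with ha
  set b := bF n i with hb
  have hab : (a:ℕ) + 1 = (b:ℕ) := rfl
  have habne : a ≠ b := aF_ne_bF n i
  have hP : (x⁻¹ a, x⁻¹ b) ∉ invSet n x := by
    simp only [invSet, Finset.mem_filter, Finset.mem_univ, true_and, Equiv.Perm.apply_inv_self,
      not_and]
    intro _ hba
    have := Fin.lt_def.mp hba
    omega
  have hins : invSet n (adjTrans n i * x) = insert (x⁻¹ a, x⁻¹ b) (invSet n x) := by
    ext ⟨p, q⟩
    simp only [invSet, Finset.mem_filter, Finset.mem_univ, true_and, Finset.mem_insert,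
      Equiv.Perm.mul_apply, Prod.mk.injEq, adjTrans_eq, ← ha, ← hb]
    rcases eq_or_ne p q with rfl | hpq
    · constructor
      · rintro ⟨hc, -⟩; exact absurd hc (lt_irrefl _)
      · rintro (⟨rfl, hq⟩ | ⟨hc, -⟩)
        · exact absurd (x⁻¹.injective hq) habne
        · exact absurd hc (lt_irrefl _)
    · have huv : x p ≠ x q := fun hc => hpq (x.injective hc)
      rw [swap_lt_swap_iff a b (x p) (x q) hab huv]
      have e1 : p = x⁻¹ a ↔ x p = a := by
        constructor
        · rintro rfl; exact x.apply_inv_self a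
        · intro hh; rw [← hh, Equiv.Perm.inv_apply_self]
      have e2 : q = x⁻¹ b ↔ x q = b := by
        constructor
        · rintro rfl; exact x.apply_inv_self b
        · intro hh; rw [← hh, Equiv.Perm.inv_apply_self]
      constructor
      · rintro ⟨hpq', ⟨hlt | ⟨hpa, hqb⟩, hnot⟩⟩
        · exact Or.inr ⟨hpq', hlt⟩
        · exact Or.inl ⟨e1.mpr hpa, e2.mpr hqb⟩
      · rintro (⟨hpa, hqb⟩ | ⟨hpq', hlt⟩)
        · subst hpa; subst hqb
          refine ⟨h, Or.inr ⟨x.apply_inv_self a, x.apply_inv_self b⟩, ?_⟩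
          rintro ⟨hc, -⟩
          rw [x.apply_inv_self] at hc
          exact habne hc
        · refine ⟨hpq', Or.inl hlt, ?_⟩
          rintro ⟨hpb, hqa⟩
          have hp' : p = x⁻¹ b := by rw [← hpb, Equiv.Perm.inv_apply_self]
          have hq' : q = x⁻¹ a := by rw [← hqa, Equiv.Perm.inv_apply_self]
          rw [hp', hq'] at hpq'
          exact absurd (hpq'.trans h) (lt_irrefl _)
  rw [nInv, hins, Finset.card_insert_of_notMem hP]
  rfl


lemma step_gt (n : ℕ) (i : Fin (n-1)) (x : Equiv.Perm (Fin n))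
    (h : x⁻¹ (bF n i) < x⁻¹ (aF n i)) :
    nInv n x = nInv n (adjTrans n i * x) + 1 := by
  set y := adjTrans n i * x with hy
  have hyx : adjTrans n i * y = x := by
    rw [hy, ← mul_assoc, adjTrans_mul_self, one_mul]
  have hinv : y⁻¹ = x⁻¹ * adjTrans n i := by
    rw [hy, mul_inv_rev, adjTrans_inv]
  have h' : y⁻¹ (aF n i) < y⁻¹ (bF n i) := by
    rw [hinv]
    simp only [Equiv.Perm.mul_apply, adjTrans_eq]
    rw [Equiv.swap_apply_left, Equiv.swap_apply_right]
    exact h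
  rw [← hyx, step_lt n i y h']

lemma nInv_mul_le (n : ℕ) (i : Fin (n-1)) (x : Equiv.Perm (Fin n)) :
    nInv n (adjTrans n i * x) ≤ nInv n x + 1 := by
  rcases lt_trichotomy (x⁻¹ (aF n i)) (x⁻¹ (bF n i)) with h | h | h
  · exact (step_lt n i x h).le
  · exact absurd (x⁻¹.injective h) (aF_ne_bF n i)
  · have := step_gt n i x h
    omega

lemma eq_one_of_no_descent (n : ℕ) (x : Equiv.Perm (Fin n))
    (h : ∀ i : Fin (n-1), x (aF n i) < x (bF n i)) : x = 1 := by
  have key : ∀ j : ℕ, (hj : j < n) → ∀ i : ℕ, (hi : i < j) → x ⟨i, by omega⟩ < x ⟨j, hj⟩ := by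
    intro j
    induction j with
    | zero => intro hj i hi; omega
    | succ j ihj =>
      intro hj i hi
      have hstep : x ⟨j, by omega⟩ < x ⟨j+1, hj⟩ := by
        have := h ⟨j, by omega⟩
        simpa [aF, bF] using this
      rcases eq_or_lt_of_le (Nat.lt_succ_iff.mp hi) with rfl | hij
      · exact hstep
      · exact lt_trans (ihj (by omega) i hij) hstep
  have mono : StrictMono x := by
    intro p q hpq
    have := key q.val q.isLt p.val (Fin.lt_def.mp hpq)
    simpa using this
  have mono' : StrictMono (x⁻¹ : Equiv.Perm (Fin n)) := by
    intro p q hpq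
    rcases lt_trichotomy (x⁻¹ p) (x⁻¹ q) with h' | h' | h'
    · exact h'
    · exact absurd (x⁻¹.injective h' ▸ hpq) (lt_irrefl _)
    · have := mono h'
      simp only [Equiv.Perm.apply_inv_self] at this
      exact absurd (hpq.trans this) (lt_irrefl _)
  haveI : WellFoundedLT (Fin n) := Finite.to_wellFoundedLT
  ext p
  have h1 : p ≤ x p := mono.le_apply
  have h2 : x p ≤ x⁻¹ (x p) := mono'.le_apply
  rw [Equiv.Perm.inv_apply_self] at h2
  exact congrArg Fin.val (le_antisymm h2 h1)

lemma exists_word (n : ℕ) : ∀ (N : ℕ) (x : Equiv.Perm (Fin n)), nInv n x = N →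
    ∃ l : List (Fin (n-1)), (l.map (adjTrans n)).prod = x ∧ l.length = nInv n x := by
  intro N
  induction N using Nat.strong_induction_on with
  | _ N ihN =>
  intro x hx
  by_cases hd : ∃ i : Fin (n-1), x⁻¹ (bF n i) < x⁻¹ (aF n i)
  · obtain ⟨i, hi⟩ := hd
    have hstep := step_gt n i x hi
    obtain ⟨l, hl, hlen⟩ := ihN (nInv n (adjTrans n i * x)) (by omega) (adjTrans n i * x) rfl
    refine ⟨i :: l, ?_, ?_⟩
    · rw [List.map_cons, List.prod_cons, hl, ← mul_assoc, adjTrans_mul_self, one_mul]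
    · simp [hlen]; omega
  · push_neg at hd
    have : x⁻¹ = 1 := by
      apply eq_one_of_no_descent
      intro i
      rcases lt_trichotomy (x⁻¹ (aF n i)) (x⁻¹ (bF n i)) with h' | h' | h'
      · exact h'
      · exact absurd (x⁻¹.injective h') (aF_ne_bF n i)
      · exact absurd h' (by simpa using hd i)
    have hx1 : x = 1 := by
      rw [← inv_inv x, this, inv_one]
    refine ⟨[], by simp [hx1], by simp [hx1, nInv_one]⟩

lemma nInv_prod_le (n : ℕ) (l : List (Fin (n-1))) :
    nInv n ((l.map (adjTrans n)).prod) ≤ l.length := by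
  induction l with
  | nil => simp [nInv_one]
  | cons i t ih =>
    rw [List.map_cons, List.prod_cons]
    calc nInv n (adjTrans n i * (t.map (adjTrans n)).prod)
        ≤ nInv n ((t.map (adjTrans n)).prod) + 1 := nInv_mul_le n i _
      _ ≤ t.length + 1 := by omega
      _ = (i :: t).length := by simp

lemma permLength_eq_nInv (n : ℕ) (x : Equiv.Perm (Fin n)) : permLength n x = nInv n x := by
  obtain ⟨l, hl, hlen⟩ := exists_word n (nInv n x) x rfl
  apply le_antisymm
  · exact Nat.sInf_le ⟨l, hlen, hl⟩
  · have hne : {k | ∃ l : List (Fin (n - 1)), l.length = k ∧ (l.map (adjTrans n)).prod = x}.Nonempty :=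
      ⟨nInv n x, l, hlen, hl⟩
    obtain ⟨l', hl'len, hl'⟩ := Nat.sInf_mem hne
    calc nInv n x = nInv n ((l'.map (adjTrans n)).prod) := by rw [hl']
      _ ≤ l'.length := nInv_prod_le n l'
      _ = permLength n x := hl'len


lemma braidMove_cons {m : ℕ} {u v : List (Fin m)} (c : Fin m) (h : BraidMove m u v) :
    BraidMove m (c :: u) (c :: v) := by
  cases h with
  | comm u v i j hij => exact BraidMove.comm (c :: u) v i j hij
  | braid u v i j hij => exact BraidMove.braid (c :: u) v i j hij

lemma eqvGen_cons {m : ℕ} {u v : List (Fin m)} (c : Fin m)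
    (h : Relation.EqvGen (BraidMove m) u v) :
    Relation.EqvGen (BraidMove m) (c :: u) (c :: v) := by
  induction h with
  | rel a b hab => exact Relation.EqvGen.rel _ _ (braidMove_cons c hab)
  | refl a => exact Relation.EqvGen.refl _
  | symm a b _ ih => exact ih.symm _ _
  | trans a b c' _ _ ih1 ih2 => exact ih1.trans _ _ _ ih2

lemma adjTrans_comm (n : ℕ) (i j : Fin (n-1)) (h : (i:ℕ) + 1 < (j:ℕ)) :
    adjTrans n i * adjTrans n j = adjTrans n j * adjTrans n i := by
  have hdis : (adjTrans n i).Disjoint (adjTrans n j) := by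
    intro v
    by_cases hv : v = aF n i ∨ v = bF n i
    · right
      rw [adjTrans_eq]
      apply Equiv.swap_apply_of_ne_of_ne <;>
        (rcases hv with rfl | rfl <;> simp only [aF, bF, ne_eq, Fin.ext_iff] <;> omega)
    · left
      push_neg at hv
      rw [adjTrans_eq]
      exact Equiv.swap_apply_of_ne_of_ne hv.1 hv.2
  exact hdis.commute.eq

lemma adjTrans_braid (n : ℕ) (i j : Fin (n-1)) (h : (i:ℕ) + 1 = (j:ℕ)) :
    adjTrans n i * adjTrans n j * adjTrans n i = adjTrans n j * adjTrans n i * adjTrans n j := by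
  set a := aF n i with ha
  set b := bF n i with hb
  set c := bF n j with hc
  have haj : aF n j = b := by simp only [aF, bF, hb, Fin.ext_iff]; omega
  have hab : a ≠ b := aF_ne_bF n i
  have hac : a ≠ c := by simp only [ha, hc, aF, bF, ne_eq, Fin.ext_iff]; omega
  have hcb : c ≠ b := by simp only [hb, hc, bF, ne_eq, Fin.ext_iff]; omega
  have hca : c ≠ a := Ne.symm hac
  have h1 : adjTrans n i * adjTrans n j * adjTrans n i = Equiv.swap a c := by
    rw [adjTrans_eq n i, adjTrans_eq n j, haj, ← ha, ← hc, Equiv.swap_comm a b,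
      Equiv.swap_comm b c]
    exact Equiv.swap_mul_swap_mul_swap hcb hca
  have h2 : adjTrans n j * adjTrans n i * adjTrans n j = Equiv.swap a c := by
    rw [adjTrans_eq n i, adjTrans_eq n j, haj, ← ha, ← hc]
    exact (Equiv.swap_mul_swap_mul_swap hab hac).trans (Equiv.swap_comm c a)
  rw [h1, h2]

/-- Descent extraction: the head of a reduced word is a descent. -/
lemma head_reduced (n : ℕ) (i : Fin (n-1)) (t : List (Fin (n-1))) (x : Equiv.Perm (Fin n))
    (hw : ((i :: t).map (adjTrans n)).prod = x)
    (hlen : (i :: t).length = nInv n x) :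
    x⁻¹ (bF n i) < x⁻¹ (aF n i) ∧ ((t.map (adjTrans n)).prod = adjTrans n i * x) ∧
      t.length = nInv n (adjTrans n i * x) ∧ nInv n (adjTrans n i * x) + 1 = nInv n x := by
  have ht : (t.map (adjTrans n)).prod = adjTrans n i * x := by
    rw [← hw, List.map_cons, List.prod_cons, ← mul_assoc, adjTrans_mul_self, one_mul]
  have hle : nInv n (adjTrans n i * x) ≤ t.length := by
    rw [← ht]; exact nInv_prod_le n t
  have hlen' : t.length + 1 = nInv n x := by simpa using hlen
  rcases lt_trichotomy (x⁻¹ (aF n i)) (x⁻¹ (bF n i)) with hd | hd | hd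
  · have := step_lt n i x hd
    omega
  · exact absurd (x⁻¹.injective hd) (aF_ne_bF n i)
  · have := step_gt n i x hd
    exact ⟨hd, ht, by omega, by omega⟩


lemma main (n : ℕ) : ∀ (k : ℕ) (x : Equiv.Perm (Fin n)) (w₁ w₂ : List (Fin (n-1))),
    (w₁.map (adjTrans n)).prod = x → (w₂.map (adjTrans n)).prod = x →
    w₁.length = k → w₂.length = k → nInv n x = k →
    Relation.EqvGen (BraidMove (n-1)) w₁ w₂ := by
  intro k
  induction k using Nat.strong_induction_on with
  | _ k ih =>
  intro x w₁ w₂ h1 h2 e1 e2 ex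
  cases w₁ with
  | nil =>
    cases w₂ with
    | nil => exact Relation.EqvGen.refl _
    | cons j t₂ =>
      exfalso; simp only [List.length_nil, List.length_cons] at e1 e2; omega
  | cons i t₁ =>
    cases w₂ with
    | nil =>
      exfalso; simp only [List.length_nil, List.length_cons] at e1 e2; omega
    | cons j t₂ =>
      by_cases hij : i = j
      · subst hij
        obtain ⟨d₁, ht₁, hlen₁, hstep₁⟩ := head_reduced n i t₁ x h1 (e1.trans ex.symm)
        obtain ⟨d₂, ht₂, hlen₂, hstep₂⟩ := head_reduced n i t₂ x h2 (e2.trans ex.symm)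
        exact eqvGen_cons i
          (ih (nInv n (adjTrans n i * x)) (by omega) (adjTrans n i * x) t₁ t₂
            ht₁ ht₂ hlen₁ hlen₂ rfl)
      · have core : ∀ (i j : Fin (n-1)) (t₁ t₂ : List (Fin (n-1))),
            ((i :: t₁).map (adjTrans n)).prod = x → ((j :: t₂).map (adjTrans n)).prod = x →
            (i :: t₁).length = k → (j :: t₂).length = k → (i:ℕ) + 1 ≤ (j:ℕ) →
            Relation.EqvGen (BraidMove (n-1)) (i :: t₁) (j :: t₂) := by
          clear hij h1 h2 e1 e2
          intro i j t₁ t₂ h1 h2 e1 e2 hij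
          obtain ⟨d₁, ht₁, hlen₁, hstep₁⟩ := head_reduced n i t₁ x h1 (e1.trans ex.symm)
          obtain ⟨d₂, ht₂, hlen₂, hstep₂⟩ := head_reduced n j t₂ x h2 (e2.trans ex.symm)
          set y := adjTrans n i * x with hy
          have hinvy : y⁻¹ = x⁻¹ * adjTrans n i := by rw [hy, mul_inv_rev, adjTrans_inv]
          rcases eq_or_lt_of_le hij with hadj | hfar
          · -- braid case : j = i + 1
            have haj : aF n j = bF n i := by
              simp only [aF, bF, Fin.ext_iff]; omega
            have fb : adjTrans n i (bF n j) = bF n j := by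
              rw [adjTrans_eq]
              apply Equiv.swap_apply_of_ne_of_ne <;>
                simp only [aF, bF, ne_eq, Fin.ext_iff] <;> omega
            have fja : adjTrans n j (aF n i) = aF n i := by
              rw [adjTrans_eq]
              apply Equiv.swap_apply_of_ne_of_ne <;>
                simp only [aF, bF, ne_eq, Fin.ext_iff] <;> omega
            have dj : y⁻¹ (bF n j) < y⁻¹ (aF n j) := by
              rw [hinvy]
              simp only [Equiv.Perm.mul_apply]
              rw [fb, haj, adjTrans_eq, Equiv.swap_apply_right]
              exact lt_trans (by rw [← haj]; exact d₂) d₁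
            have hz := step_gt n j y dj
            have hinvz : (adjTrans n j * y)⁻¹ = x⁻¹ * adjTrans n i * adjTrans n j := by
              rw [mul_inv_rev, adjTrans_inv, hinvy]
            have di2 : (adjTrans n j * y)⁻¹ (bF n i) < (adjTrans n j * y)⁻¹ (aF n i) := by
              rw [hinvz]
              simp only [Equiv.Perm.mul_apply]
              rw [fja]
              rw [show adjTrans n i (aF n i) = bF n i by rw [adjTrans_eq, Equiv.swap_apply_left]]
              rw [show adjTrans n j (bF n i) = bF n j by
                    rw [← haj, adjTrans_eq, Equiv.swap_apply_left]]
              rw [fb]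
              rw [← haj]
              exact d₂
            have hw := step_gt n i (adjTrans n j * y) di2
            obtain ⟨u, hu, hulen⟩ :=
              exists_word n (nInv n (adjTrans n i * (adjTrans n j * y)))
                (adjTrans n i * (adjTrans n j * y)) rfl
            -- w₃ = i :: j :: i :: u,  w₄ = j :: i :: j :: u
            have hjiu : ((j :: i :: u).map (adjTrans n)).prod = y := by
              simp only [List.map_cons, List.prod_cons, hu]
              rw [← mul_assoc (adjTrans n i) (adjTrans n i), adjTrans_mul_self, one_mul,
                ← mul_assoc, adjTrans_mul_self, one_mul]
            have E1 : Relation.EqvGen (BraidMove (n-1)) (i :: t₁) (i :: j :: i :: u) :=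
              eqvGen_cons i (ih (nInv n y) (by omega) y t₁ (j :: i :: u) ht₁ hjiu hlen₁
                (by simp only [List.length_cons, hulen]; omega) rfl)
            have E2 : Relation.EqvGen (BraidMove (n-1)) (i :: j :: i :: u) (j :: i :: j :: u) :=
              Relation.EqvGen.rel _ _ (BraidMove.braid [] u i j hadj)
            have hiju : ((i :: j :: u).map (adjTrans n)).prod = adjTrans n j * x := by
              simp only [List.map_cons, List.prod_cons, hu, hy]
              simp only [← mul_assoc]
              rw [adjTrans_braid n i j hadj]
              rw [mul_assoc (adjTrans n j * adjTrans n i) (adjTrans n j) (adjTrans n j),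
                adjTrans_mul_self, mul_one,
                mul_assoc (adjTrans n j) (adjTrans n i) (adjTrans n i),
                adjTrans_mul_self, mul_one]
            have E3 : Relation.EqvGen (BraidMove (n-1)) (j :: t₂) (j :: i :: j :: u) :=
              eqvGen_cons j (ih (nInv n (adjTrans n j * x)) (by omega) (adjTrans n j * x)
                t₂ (i :: j :: u) ht₂ hiju hlen₂
                (by simp only [List.length_cons, hulen]; omega) rfl)
            exact Relation.EqvGen.trans _ _ _ E1
              (Relation.EqvGen.trans _ _ _ E2 (Relation.EqvGen.symm _ _ E3))
          · -- commuting case : i + 1 < j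
            have fa : adjTrans n i (aF n j) = aF n j := by
              rw [adjTrans_eq]
              apply Equiv.swap_apply_of_ne_of_ne <;>
                simp only [aF, bF, ne_eq, Fin.ext_iff] <;> omega
            have fb : adjTrans n i (bF n j) = bF n j := by
              rw [adjTrans_eq]
              apply Equiv.swap_apply_of_ne_of_ne <;>
                simp only [aF, bF, ne_eq, Fin.ext_iff] <;> omega
            have dj : y⁻¹ (bF n j) < y⁻¹ (aF n j) := by
              rw [hinvy]
              simp only [Equiv.Perm.mul_apply, fa, fb]
              exact d₂
            have hz := step_gt n j y dj
            obtain ⟨u, hu, hulen⟩ := exists_word n (nInv n (adjTrans n j * y)) (adjTrans n j * y) rfl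
            have hju : ((j :: u).map (adjTrans n)).prod = y := by
              simp only [List.map_cons, List.prod_cons, hu]
              rw [← mul_assoc, adjTrans_mul_self, one_mul]
            have E1 : Relation.EqvGen (BraidMove (n-1)) (i :: t₁) (i :: j :: u) :=
              eqvGen_cons i (ih (nInv n y) (by omega) y t₁ (j :: u) ht₁ hju hlen₁
                (by simp only [List.length_cons, hulen]; omega) rfl)
            have E2 : Relation.EqvGen (BraidMove (n-1)) (i :: j :: u) (j :: i :: u) :=
              Relation.EqvGen.rel _ _ (BraidMove.comm [] u i j hfar)
            have hiu : ((i :: u).map (adjTrans n)).prod = adjTrans n j * x := by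
              simp only [List.map_cons, List.prod_cons, hu, hy]
              simp only [← mul_assoc]
              rw [adjTrans_comm n i j hfar,
                mul_assoc (adjTrans n j) (adjTrans n i) (adjTrans n i),
                adjTrans_mul_self, mul_one]
            have E3 : Relation.EqvGen (BraidMove (n-1)) (j :: t₂) (j :: i :: u) :=
              eqvGen_cons j (ih (nInv n (adjTrans n j * x)) (by omega) (adjTrans n j * x)
                t₂ (i :: u) ht₂ hiu hlen₂
                (by simp only [List.length_cons, hulen]; omega) rfl)
            exact Relation.EqvGen.trans _ _ _ E1
              (Relation.EqvGen.trans _ _ _ E2 (Relation.EqvGen.symm _ _ E3))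
        rcases Nat.lt_trichotomy (i : ℕ) (j : ℕ) with hlt | heq | hgt
        · exact core i j t₁ t₂ h1 h2 e1 e2 hlt
        · exact absurd (Fin.ext heq) hij
        · exact Relation.EqvGen.symm _ _ (core j i t₂ t₁ h2 h1 e2 e1 hgt)

end MatsumotoAux

/-- **Matsumoto's lemma for `Σ_n`.** Any two reduced expressions
for the same element of the symmetric group in the adjacent transpositions can
be transformed into each other using only the braid relations (without using
`s_i² = 1`). -/
theorem reduced_words_braid_equivalent (n : ℕ) (x : Equiv.Perm (Fin n))
    (w₁ w₂ : List (Fin (n - 1)))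
    (h₁ : (w₁.map (adjTrans n)).prod = x) (h₂ : (w₂.map (adjTrans n)).prod = x)
    (hl₁ : w₁.length = permLength n x) (hl₂ : w₂.length = permLength n x) :
    Relation.EqvGen (BraidMove (n - 1)) w₁ w₂ := by
  have hpl := MatsumotoAux.permLength_eq_nInv n x
  exact MatsumotoAux.main n (permLength n x) x w₁ w₂ h₁ h₂ hl₁ hl₂ hpl.symm
end

section
/- In the inverse braid monoid IB_n, the generator ε_i commutes with the Garside fundamental element Δ via the relation ε_i Δ = Δ ε_{n+1-i} for all i = 1,...,n. -/
/-- Generators of the inverse braid monoid on `n` strands: `s i` is the Artin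
generator `σ_{i+1}` (0-based `i`), `si i` is its formal inverse, and `e a` is the
idempotent `ε_{a+1}` (the trivial partial braid with the `(a+1)`-st string removed). -/
inductive IBGen (n : ℕ) : Type
  | s (i : Fin (n - 1))
  | si (i : Fin (n - 1))
  | e (a : Fin n)

/-- The defining relations of the inverse braid monoid `IB_n`
(braid relations, invertibility of the `σ_i`, and the Easdown–Lavers/Gilbert
relations between the `ε` and the `σ`). Indices: the generator `s i` crosses the
(0-based) strands `i` and `i+1`; `e a` deletes the (0-based) strand `a`. -/
inductive ibRel (n : ℕ) : FreeMonoid (IBGen n) → FreeMonoid (IBGen n) → Prop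
  | braid_comm (i j : Fin (n - 1)) (h : (i : ℕ) + 1 < (j : ℕ)) :
      ibRel n (.of (.s i) * .of (.s j)) (.of (.s j) * .of (.s i))
  | braid (i j : Fin (n - 1)) (h : (i : ℕ) + 1 = (j : ℕ)) :
      ibRel n (.of (.s i) * .of (.s j) * .of (.s i)) (.of (.s j) * .of (.s i) * .of (.s j))
  | inv_right (i : Fin (n - 1)) : ibRel n (.of (.s i) * .of (.si i)) 1
  | inv_left (i : Fin (n - 1)) : ibRel n (.of (.si i) * .of (.s i)) 1
  | e_comm (a : Fin n) (i : Fin (n - 1)) (h : (i : ℕ) + 2 ≤ (a : ℕ) ∨ (a : ℕ) + 2 ≤ (i : ℕ)) :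
      ibRel n (.of (.e a) * .of (.s i)) (.of (.s i) * .of (.e a))
  | e_s (i : Fin (n - 1)) (a b : Fin n) (ha : (a : ℕ) = (i : ℕ)) (hb : (b : ℕ) = (i : ℕ) + 1) :
      ibRel n (.of (.e a) * .of (.s i)) (.of (.s i) * .of (.e b))
  | e_s' (i : Fin (n - 1)) (a b : Fin n) (ha : (a : ℕ) = (i : ℕ)) (hb : (b : ℕ) = (i : ℕ) + 1) :
      ibRel n (.of (.e b) * .of (.s i)) (.of (.s i) * .of (.e a))
  | idem (a : Fin n) : ibRel n (.of (.e a) * .of (.e a)) (.of (.e a))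
  | e_ss (i : Fin (n - 1)) (b : Fin n) (hb : (b : ℕ) = (i : ℕ) + 1) :
      ibRel n (.of (.e b) * .of (.s i) * .of (.s i)) (.of (.e b))
  | ss_e (i : Fin (n - 1)) (b : Fin n) (hb : (b : ℕ) = (i : ℕ) + 1) :
      ibRel n (.of (.s i) * .of (.s i) * .of (.e b)) (.of (.e b))
  | ee_s (i : Fin (n - 1)) (a b : Fin n) (ha : (a : ℕ) = (i : ℕ)) (hb : (b : ℕ) = (i : ℕ) + 1) :
      ibRel n (.of (.e a) * .of (.e b) * .of (.s i)) (.of (.e a) * .of (.e b))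
  | s_ee (i : Fin (n - 1)) (a b : Fin n) (ha : (a : ℕ) = (i : ℕ)) (hb : (b : ℕ) = (i : ℕ) + 1) :
      ibRel n (.of (.s i) * .of (.e a) * .of (.e b)) (.of (.e a) * .of (.e b))

/-- The congruence on the free monoid generated by the defining relations of `IB_n`. -/
def ibCon (n : ℕ) : Con (FreeMonoid (IBGen n)) := conGen (ibRel n)

/-- The inverse braid monoid `IB_n` of partial braids on `n` strands,
given by the Easdown–Lavers/Gilbert presentation. -/
def IB (n : ℕ) : Type := (ibCon n).Quotient

instance (n : ℕ) : Monoid (IB n) := by unfold IB; infer_instance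

/-- The generator `σ_{i+1}` (0-based `i`) of `IB_n`. -/
def ibS (n : ℕ) (i : Fin (n - 1)) : IB n := (ibCon n).mk' (.of (.s i))

/-- The inverse generator `σ_{i+1}^{-1}` (0-based `i`) of `IB_n`. -/
def ibSi (n : ℕ) (i : Fin (n - 1)) : IB n := (ibCon n).mk' (.of (.si i))

/-- The idempotent generator `ε_{a+1}` (0-based `a`) of `IB_n`. -/
def ibE (n : ℕ) (a : Fin n) : IB n := (ibCon n).mk' (.of (.e a))

/-- The generator `σ_{t+1}` of `IB_n` with unguarded natural-number (0-based)
index `t`; equal to `1` when out of range. -/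
def ibSN (n : ℕ) (t : ℕ) : IB n := if h : t < n - 1 then ibS n ⟨t, h⟩ else 1

/-- The inverse generator `σ_{t+1}⁻¹` of `IB_n` with unguarded 0-based index. -/
def ibSiN (n : ℕ) (t : ℕ) : IB n := if h : t < n - 1 then ibSi n ⟨t, h⟩ else 1

/-- Garside's fundamental element
`Δ = (σ_1⋯σ_{n-1})(σ_1⋯σ_{n-2})⋯(σ_1σ_2)σ_1` in `IB_n`. -/
def ibDelta (n : ℕ) : IB n :=
  ((List.range (n - 1)).reverse.map
    (fun t => ((List.range (t + 1)).map (ibSN n)).prod)).prod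

/-- The inverse `Δ⁻¹` of Garside's fundamental element, written as a word in
the inverse generators. -/
def ibDeltaInv (n : ℕ) : IB n :=
  ((List.range (n - 1)).map
    (fun t => ((List.range (t + 1)).reverse.map (ibSiN n)).prod)).prod

section IBAux

namespace IBAux

/-- The transposition of `t` and `t+1` as a function on `ℕ`. -/
def swapN (t a : ℕ) : ℕ := if a = t then t + 1 else if a = t + 1 then t else a

/-- Track an index through a word of `σ`-generators. -/
def track (w : List ℕ) (a : ℕ) : ℕ := w.foldl (fun x t => swapN t x) a

@[simp] lemma track_nil (a : ℕ) : track [] a = a := rfl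

lemma track_cons (t : ℕ) (w : List ℕ) (a : ℕ) :
    track (t :: w) a = track w (swapN t a) := rfl

lemma track_append (w₁ w₂ : List ℕ) (a : ℕ) :
    track (w₁ ++ w₂) a = track w₂ (track w₁ a) :=
  List.foldl_append

lemma swapN_lt {n t a : ℕ} (ht : t + 1 < n) (ha : a < n) : swapN t a < n := by
  unfold swapN; split_ifs <;> omega

lemma swapN_of_gt {t a : ℕ} (h : t + 1 < a) : swapN t a = a := by
  unfold swapN; split_ifs <;> omega

lemma track_fixed {w : List ℕ} {a : ℕ} (h : ∀ t ∈ w, t + 1 < a) : track w a = a := by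
  induction w with
  | nil => rfl
  | cons t w ih =>
      rw [track_cons, swapN_of_gt (h t (by simp))]
      exact ih fun s hs => h s (by simp [hs])

lemma track_lt {n : ℕ} {w : List ℕ} (hw : ∀ t ∈ w, t + 1 < n) {a : ℕ} (ha : a < n) :
    track w a < n := by
  induction w generalizing a with
  | nil => exact ha
  | cons t w ih =>
      rw [track_cons]
      exact ih (fun s hs => hw s (by simp [hs])) (swapN_lt (hw t (by simp)) ha)

lemma track_range_of_gt {m a : ℕ} (h : m < a) : track (List.range m) a = a :=
  track_fixed (by intro t ht; simp [List.mem_range] at ht; omega)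

lemma track_range {m a : ℕ} (ha : a ≤ m) :
    track (List.range m) a = if a = 0 then m else a - 1 := by
  induction m with
  | zero => interval_cases a; simp
  | succ m ih =>
      rw [List.range_succ, track_append]
      rcases Nat.lt_or_ge a (m + 1) with h | h
      · rw [ih (by omega)]
        rcases Nat.eq_zero_or_pos a with rfl | hpos
        · simp [track, swapN]
        · have h1 : a - 1 ≠ m := by omega
          have h2 : a - 1 ≠ m + 1 := by omega
          simp only [hpos.ne', if_false, track, List.foldl_cons, List.foldl_nil]
          unfold swapN
          simp [h1, h2]
      · have haa : a = m + 1 := by omega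
        rw [track_range_of_gt (by omega)]
        subst haa
        simp [track, swapN]

/-- The index word of the Garside element `Δ` in `IB_n`. -/
def deltaWord (n : ℕ) : List ℕ :=
  ((List.range (n - 1)).reverse.map (fun t => List.range (t + 1))).flatten

lemma deltaWord_mem {n t : ℕ} (h : t ∈ deltaWord n) : t + 1 < n := by
  unfold deltaWord at h
  simp only [List.mem_flatten, List.mem_map, List.mem_reverse, List.mem_range] at h
  obtain ⟨l, ⟨s, hs, rfl⟩, ht⟩ := h
  simp only [List.mem_range] at ht
  omega

lemma deltaWord_succ (n : ℕ) : deltaWord (n + 2) = List.range (n + 1) ++ deltaWord (n + 1) := by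
  unfold deltaWord
  have : (n + 2) - 1 = (n + 1 - 1) + 1 := by omega
  rw [this, List.range_succ]
  simp

lemma track_deltaWord : ∀ n, ∀ a < n, track (deltaWord n) a = n - 1 - a := by
  intro n
  induction n with
  | zero => omega
  | succ n ih =>
      intro a ha
      match n, ih with
      | 0, _ =>
          interval_cases a
          simp [deltaWord, track]
      | (m + 1), ih =>
          rw [deltaWord_succ, track_append]
          rcases Nat.eq_zero_or_pos a with rfl | hpos
          · have h0 : track (List.range (m + 1)) 0 = m + 1 := by
              rw [track_range (by omega)]; simp
            rw [h0, track_fixed (fun t ht => by have := deltaWord_mem ht; omega)]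
            omega
          · have h0 : track (List.range (m + 1)) a = a - 1 := by
              rw [track_range (by omega)]; simp [hpos.ne']
            rw [h0, ih (a - 1) (by omega)]
            omega

end IBAux

end IBAux

section IBAlg

namespace IBAux

variable {n : ℕ}

lemma rel_eq {x y : FreeMonoid (IBGen n)} (h : ibRel n x y) :
    (ibCon n).mk' x = (ibCon n).mk' y :=
  (Con.eq (ibCon n)).2 (ConGen.Rel.of _ _ h)

lemma gen_inv_right (i : Fin (n - 1)) : ibS n i * ibSi n i = 1 := by
  have h := rel_eq (ibRel.inv_right (n := n) i)
  simp [ibS, ibSi, map_mul, map_one] at h; exact h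

lemma gen_inv_left (i : Fin (n - 1)) : ibSi n i * ibS n i = 1 := by
  have h := rel_eq (ibRel.inv_left (n := n) i)
  simp [ibS, ibSi, map_mul, map_one] at h; exact h

lemma gen_braid (i j : Fin (n - 1)) (h : (i : ℕ) + 1 = (j : ℕ)) :
    ibS n i * (ibS n j * ibS n i) = ibS n j * (ibS n i * ibS n j) := by
  have h := rel_eq (ibRel.braid (n := n) i j h)
  simp only [ibS, map_mul] at h
  simp only [mul_assoc] at h; exact h

lemma gen_e_comm (a : Fin n) (i : Fin (n - 1))
    (h : (i : ℕ) + 2 ≤ (a : ℕ) ∨ (a : ℕ) + 2 ≤ (i : ℕ)) :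
    ibE n a * ibS n i = ibS n i * ibE n a := by
  have h := rel_eq (ibRel.e_comm (n := n) a i h)
  simp [ibE, ibS, map_mul] at h; exact h

lemma gen_e_s (i : Fin (n - 1)) (a b : Fin n) (ha : (a : ℕ) = (i : ℕ))
    (hb : (b : ℕ) = (i : ℕ) + 1) :
    ibE n a * ibS n i = ibS n i * ibE n b := by
  have h := rel_eq (ibRel.e_s (n := n) i a b ha hb)
  simp [ibE, ibS, map_mul] at h; exact h

lemma gen_e_s' (i : Fin (n - 1)) (a b : Fin n) (ha : (a : ℕ) = (i : ℕ))
    (hb : (b : ℕ) = (i : ℕ) + 1) :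
    ibE n b * ibS n i = ibS n i * ibE n a := by
  have h := rel_eq (ibRel.e_s' (n := n) i a b ha hb)
  simp [ibE, ibS, map_mul] at h; exact h

/-- From a two-sided invertible element `s` and `x * s = s * y`,
conclude `y * s⁻¹ = s⁻¹ * x`. -/
lemma flip {M : Type*} [Monoid M] {s s' x y : M} (h1 : s * s' = 1) (h2 : s' * s = 1)
    (h : x * s = s * y) : y * s' = s' * x := by
  calc y * s' = ((s' * s) * y) * s' := by rw [h2, one_mul]
    _ = (s' * (s * y)) * s' := by rw [mul_assoc s' s y]
    _ = (s' * (x * s)) * s' := by rw [← h]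
    _ = s' * x * (s * s') := by simp only [mul_assoc]
    _ = s' * x := by rw [h1, mul_one]

/-- The derived commutation `ε_a σ_j = σ_j ε_a` for `a + 1 = j` (0-based),
which is not among the defining relations but follows from them. -/
lemma e_s_adjacent (i j : Fin (n - 1)) (hij : (i : ℕ) + 1 = (j : ℕ)) (a : Fin n)
    (ha : (a : ℕ) = (i : ℕ)) :
    ibE n a * ibS n j = ibS n j * ibE n a := by
  have hjn : (j : ℕ) < n - 1 := j.isLt
  have hb' : (i : ℕ) + 1 < n := by omega
  have hc' : (i : ℕ) + 2 < n := by omega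
  set b : Fin n := ⟨(i : ℕ) + 1, hb'⟩ with hbdef
  set c : Fin n := ⟨(i : ℕ) + 2, hc'⟩ with hcdef
  set S := ibS n i with hS
  set T := ibS n j with hT
  set S' := ibSi n i with hS'
  set T' := ibSi n j with hT'
  set A := ibE n a with hA
  set B := ibE n b with hB
  set C := ibE n c with hC
  have hSS' : S * S' = 1 := gen_inv_right i
  have hS'S : S' * S = 1 := gen_inv_left i
  have hTT' : T * T' = 1 := gen_inv_right j
  have hT'T : T' * T = 1 := gen_inv_left j
  have hbr : S * (T * S) = T * (S * T) := gen_braid i j hij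
  have hAS : A * S = S * B := gen_e_s i a b ha rfl
  have hBT : B * T = T * C := gen_e_s j b c (by simp [hbdef, hij]) (by simp [hcdef, ← hij])
  have hCS : C * S = S * C := gen_e_comm c i (Or.inl (by simp [hcdef]))
  have hCT' : C * T' = T' * B := flip hTT' hT'T hBT
  have hBS' : B * S' = S' * A := flip hSS' hS'S hAS
  have aux1 : S' * (T * S) = T * (S * T') := by
    calc S' * (T * S) = S' * (T * (S * (T * T'))) := by rw [hTT', mul_one]
      _ = S' * ((T * (S * T)) * T') := by simp only [mul_assoc]
      _ = S' * ((S * (T * S)) * T') := by rw [← hbr]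
      _ = (S' * S) * ((T * S) * T') := by simp only [mul_assoc]
      _ = T * (S * T') := by rw [hS'S, one_mul, mul_assoc]
  have aux2 : S' * T = T * (S * (T' * S')) := by
    calc S' * T = S' * (T * (S * S')) := by rw [hSS', mul_one]
      _ = (S' * (T * S)) * S' := by simp only [mul_assoc]
      _ = (T * (S * T')) * S' := by rw [aux1]
      _ = T * (S * (T' * S')) := by simp only [mul_assoc]
  have aux3 : S * (T * (S * (T' * S'))) = T := by
    calc S * (T * (S * (T' * S'))) = (S * (T * S)) * (T' * S') := by simp only [mul_assoc]
      _ = (T * (S * T)) * (T' * S') := by rw [hbr]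
      _ = T * (S * ((T * T') * S')) := by simp only [mul_assoc]
      _ = T * (S * S') := by rw [hTT', one_mul]
      _ = T := by rw [hSS', mul_one]
  have step0 : S * (S' * T) = T := by rw [← mul_assoc, hSS', one_mul]
  calc A * T = A * (S * (S' * T)) := by rw [step0]
    _ = S * (B * (S' * T)) := by rw [← mul_assoc, hAS, mul_assoc]
    _ = S * (B * (T * (S * (T' * S')))) := by rw [aux2]
    _ = S * ((B * T) * (S * (T' * S'))) := by rw [← mul_assoc B T]
    _ = S * ((T * C) * (S * (T' * S'))) := by rw [hBT]
    _ = S * (T * ((C * S) * (T' * S'))) := by simp only [mul_assoc]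
    _ = S * (T * ((S * C) * (T' * S'))) := by rw [hCS]
    _ = S * (T * (S * ((C * T') * S'))) := by simp only [mul_assoc]
    _ = S * (T * (S * ((T' * B) * S'))) := by rw [hCT']
    _ = S * (T * (S * (T' * (B * S')))) := by simp only [mul_assoc]
    _ = S * (T * (S * (T' * (S' * A)))) := by rw [hBS']
    _ = (S * (T * (S * (T' * S')))) * A := by simp only [mul_assoc]
    _ = T * A := by rw [aux3]

lemma e_mul_sN (t : ℕ) (ht : t + 1 < n) (a b : Fin n) (hb : (b : ℕ) = swapN t (a : ℕ)) :
    ibE n a * ibSN n t = ibSN n t * ibE n b := by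
  have htn : t < n - 1 := by omega
  rw [ibSN, dif_pos htn]
  set i : Fin (n - 1) := ⟨t, htn⟩ with hidef
  have hit : (i : ℕ) = t := rfl
  unfold swapN at hb
  by_cases h1 : (a : ℕ) = t
  · rw [if_pos h1] at hb
    exact gen_e_s i a b (by omega) (by omega)
  · rw [if_neg h1] at hb
    by_cases h2 : (a : ℕ) = t + 1
    · rw [if_pos h2] at hb
      exact gen_e_s' i b a (by omega) (by omega)
    · rw [if_neg h2] at hb
      have hba : b = a := Fin.ext hb
      subst hba
      by_cases h3 : (b : ℕ) + 1 = t
      · have hbn : (b : ℕ) < n - 1 := by omega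
        exact e_s_adjacent ⟨(b : ℕ), hbn⟩ i (by simpa using h3) b rfl
      · exact gen_e_comm b i (by omega)

lemma e_mul_word (w : List ℕ) (hw : ∀ t ∈ w, t + 1 < n) (a b : Fin n)
    (hb : (b : ℕ) = track w (a : ℕ)) :
    ibE n a * (w.map (ibSN n)).prod = (w.map (ibSN n)).prod * ibE n b := by
  induction w generalizing a with
  | nil =>
      simp only [track_nil] at hb
      rw [Fin.ext hb]
      simp
  | cons t w ih =>
      have ht := hw t (by simp)
      have ha' : swapN t (a : ℕ) < n := swapN_lt ht a.isLt
      simp only [List.map_cons, List.prod_cons]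
      rw [← mul_assoc, e_mul_sN t ht a ⟨swapN t (a : ℕ), ha'⟩ rfl, mul_assoc,
        ih (fun s hs => hw s (by simp [hs])) ⟨swapN t (a : ℕ), ha'⟩
          (by rwa [track_cons] at hb), mul_assoc]

lemma ibDelta_eq_word (n : ℕ) :
    ibDelta n = ((deltaWord n).map (ibSN n)).prod := by
  unfold ibDelta deltaWord
  rw [List.map_flatten, List.prod_flatten, List.map_map, List.map_map]
  rfl

end IBAux

end IBAlg

/-- In the inverse braid monoid `IB_n`, the idempotent
generators commute with the Garside element via `ε_i Δ = Δ ε_{n+1-i}`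
(1-based; here `i.rev` is the 0-based version of `n+1-i`). -/
theorem ibE_mul_delta (n : ℕ) (i : Fin n) :
    ibE n i * ibDelta n = ibDelta n * ibE n i.rev := by
  rw [IBAux.ibDelta_eq_word]
  exact IBAux.e_mul_word _ (fun t ht => IBAux.deltaWord_mem ht) i i.rev
    (by rw [Fin.val_rev, IBAux.track_deltaWord n _ i.isLt]; omega)
end

section
/- The pairing μ : IB_k × IB_l → IB_{k+l}, defined by placing partial braids side by side (μ(σ'_i, e) = σ_i, μ(e, σ''_j) = σ_{j+k}, μ(ε'_i, e) = ε_i, μ(e, ε''_j) = ε_{j+k}), is a well-defined monoid homomorphism making the diagram with the standard pairing Br_k × Br_l → Br_{k+l} and the canonical inclusions Br_m → IB_m commute. -/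
namespace IBaux

variable {n : ℕ}

lemma mk_rel {x y : FreeMonoid (IBGen n)} (h : ibRel n x y) :
    (ibCon n).mk' x = (ibCon n).mk' y := by
  exact (Con.eq _).mpr (ConGen.Rel.of _ _ h)

lemma mk_mul (x y : FreeMonoid (IBGen n)) :
    (ibCon n).mk' x * (ibCon n).mk' y = (ibCon n).mk' (x * y) :=
  (map_mul _ _ _).symm

lemma rel_braid_comm (i j : Fin (n - 1)) (h : (i : ℕ) + 1 < (j : ℕ)) :
    ibS n i * ibS n j = ibS n j * ibS n i := by
  unfold ibS; erw [mk_mul, mk_mul]; exact mk_rel (ibRel.braid_comm i j h)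

lemma rel_braid (i j : Fin (n - 1)) (h : (i : ℕ) + 1 = (j : ℕ)) :
    ibS n i * ibS n j * ibS n i = ibS n j * ibS n i * ibS n j := by
  unfold ibS; exact mk_rel (ibRel.braid i j h)

lemma rel_s_si (i : Fin (n - 1)) : ibS n i * ibSi n i = 1 := by
  unfold ibS ibSi; erw [mk_mul, ← (ibCon n).mk'.map_one]
  exact mk_rel (ibRel.inv_right i)

lemma rel_si_s (i : Fin (n - 1)) : ibSi n i * ibS n i = 1 := by
  unfold ibS ibSi; erw [mk_mul, ← (ibCon n).mk'.map_one]
  exact mk_rel (ibRel.inv_left i)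

/-- The generator `σ` as a unit of `IB n`. -/
def sU (i : Fin (n - 1)) : (IB n)ˣ := ⟨ibS n i, ibSi n i, rel_s_si i, rel_si_s i⟩

lemma rel_e_comm (a : Fin n) (i : Fin (n - 1))
    (h : (i : ℕ) + 2 ≤ (a : ℕ) ∨ (a : ℕ) + 2 ≤ (i : ℕ)) :
    ibE n a * ibS n i = ibS n i * ibE n a := by
  unfold ibS ibE; erw [mk_mul, mk_mul]; exact mk_rel (ibRel.e_comm a i h)

lemma rel_e_s (i : Fin (n - 1)) (a b : Fin n) (ha : (a : ℕ) = (i : ℕ))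
    (hb : (b : ℕ) = (i : ℕ) + 1) : ibE n a * ibS n i = ibS n i * ibE n b := by
  unfold ibS ibE; erw [mk_mul, mk_mul]; exact mk_rel (ibRel.e_s i a b ha hb)

lemma rel_e_s' (i : Fin (n - 1)) (a b : Fin n) (ha : (a : ℕ) = (i : ℕ))
    (hb : (b : ℕ) = (i : ℕ) + 1) : ibE n b * ibS n i = ibS n i * ibE n a := by
  unfold ibS ibE; erw [mk_mul, mk_mul]; exact mk_rel (ibRel.e_s' i a b ha hb)

lemma rel_ee_s (i : Fin (n - 1)) (a b : Fin n) (ha : (a : ℕ) = (i : ℕ))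
    (hb : (b : ℕ) = (i : ℕ) + 1) :
    ibE n a * ibE n b * ibS n i = ibE n a * ibE n b := by
  unfold ibS ibE
  erw [mk_mul, mk_mul]
  exact mk_rel (ibRel.ee_s i a b ha hb)

lemma rel_s_ee (i : Fin (n - 1)) (a b : Fin n) (ha : (a : ℕ) = (i : ℕ))
    (hb : (b : ℕ) = (i : ℕ) + 1) :
    ibS n i * ibE n a * ibE n b = ibE n a * ibE n b := by
  unfold ibS ibE
  exact mk_rel (ibRel.s_ee i a b ha hb)

/-- From `x * u = u * y` conclude `y * u⁻¹ = u⁻¹ * x`. -/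
lemma swap_u {M : Type*} [Monoid M] {x y : M} {u : Mˣ} (h : x * u = u * y) :
    y * ↑u⁻¹ = (↑u⁻¹ : M) * x := by
  have h2 : (↑u⁻¹ : M) * (x * ↑u) * ↑u⁻¹ = ↑u⁻¹ * (↑u * y) * ↑u⁻¹ := by rw [h]
  simpa [mul_assoc] using h2.symm

lemma mulc {M : Type*} [Monoid M] {x u y : M} (h : x * u = u * y) (t : M) :
    x * (u * t) = u * (y * t) := by rw [← mul_assoc, h, mul_assoc]

lemma sU_coe (i : Fin (n - 1)) : ((sU i : (IB n)ˣ) : IB n) = ibS n i := rfl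

lemma sU_inv_coe (i : Fin (n - 1)) : ((sU i)⁻¹ : (IB n)ˣ) = (ibSi n i : IB n) := rfl

/-- `ε_{i-1}` commutes with `σ_i` (adjacent-below case, derived). -/
lemma e_s_near (a : Fin n) (i : Fin (n - 1)) (hai : (a : ℕ) + 1 = (i : ℕ)) :
    ibE n a * ibS n i = ibS n i * ibE n a := by
  have hin : (i : ℕ) < n - 1 := i.isLt
  have hj : (a : ℕ) < n - 1 := by omega
  have hi' : (i : ℕ) < n := by omega
  have hbn : (i : ℕ) + 1 < n := by omega
  set j : Fin (n - 1) := ⟨(a : ℕ), hj⟩ with hjdef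
  set i' : Fin n := ⟨(i : ℕ), hi'⟩ with hi'def
  set b : Fin n := ⟨(i : ℕ) + 1, hbn⟩ with hbdef
  set P : (IB n)ˣ := sU j with hP
  set Q : (IB n)ˣ := sU i with hQ
  have h1 : ibE n a * ↑P = ↑P * ibE n i' := rel_e_s j a i' rfl (by simp [hi'def, hjdef]; omega)
  have h2 : ibE n i' * ↑P = ↑P * ibE n a := rel_e_s' j a i' rfl (by simp [hi'def, hjdef]; omega)
  have h3 : ibE n i' * ↑Q = ↑Q * ibE n b := rel_e_s i i' b rfl rfl
  have h4 : ibE n b * ↑Q = ↑Q * ibE n i' := rel_e_s' i i' b rfl rfl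
  have h5 : ibE n b * ↑P = ↑P * ibE n b := rel_e_comm b j (by simp [hbdef, hjdef]; omega)
  have hbr : (↑P : IB n) * ↑Q * ↑P = ↑Q * ↑P * ↑Q := rel_braid j i (by simp [hjdef]; omega)
  -- E i' * Q⁻¹ = Q⁻¹ * E b
  have h6 : ibE n i' * ↑Q⁻¹ = (↑Q⁻¹ : IB n) * ibE n b := swap_u h4
  -- key : E i' commutes with Q⁻¹ * (P * Q)
  have key : ibE n i' * (↑Q⁻¹ * (↑P * ↑Q)) = (↑Q⁻¹ : IB n) * (↑P * (↑Q * ibE n i')) := by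
    rw [mulc h6, mulc h5, h4]
  have hb2 : (↑P : IB n) * (↑Q * ↑P⁻¹) = ↑Q⁻¹ * (↑P * ↑Q) := by
    have h7 : (↑Q⁻¹ : IB n) * (↑P * ↑Q * ↑P) * ↑P⁻¹ = ↑Q⁻¹ * (↑Q * ↑P * ↑Q) * ↑P⁻¹ := by
      rw [hbr]
    simpa [mul_assoc] using h7.symm
  have key2 : ibE n i' * (↑P * (↑Q * ↑P⁻¹)) = (↑P : IB n) * (↑Q * ↑P⁻¹) * ibE n i' := by
    rw [hb2, key]; simp [mul_assoc]
  have hEa : (↑P⁻¹ : IB n) * (ibE n i' * ↑P) = ibE n a := by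
    rw [h2]; simp
  calc ibE n a * ↑Q = ↑P⁻¹ * (ibE n i' * ↑P) * ↑Q := by rw [hEa]
    _ = ↑P⁻¹ * (ibE n i' * (↑P * (↑Q * ↑P⁻¹)) * ↑P) := by simp [mul_assoc]
    _ = ↑P⁻¹ * ((↑P : IB n) * (↑Q * ↑P⁻¹) * ibE n i' * ↑P) := by rw [key2]
    _ = ↑Q * (↑P⁻¹ * (ibE n i' * ↑P)) := by simp [mul_assoc]
    _ = ↑Q * ibE n a := by rw [hEa]

/-- `ε` commutes with any `σ` not crossing its strand. -/
lemma e_s_comm (a : Fin n) (i : Fin (n - 1)) (h1 : (a : ℕ) ≠ (i : ℕ))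
    (h2 : (a : ℕ) ≠ (i : ℕ) + 1) : ibE n a * ibS n i = ibS n i * ibE n a := by
  rcases Nat.lt_trichotomy (a : ℕ) (i : ℕ) with h | h | h
  · rcases Nat.lt_or_ge ((a : ℕ) + 1) (i : ℕ) with h' | h'
    · exact rel_e_comm a i (Or.inr (by omega))
    · exact e_s_near a i (by omega)
  · exact absurd h h1
  · exact rel_e_comm a i (Or.inl (by omega))

/-- Adjacent idempotents commute. -/
lemma e_e_adj (a b : Fin n) (hab : (a : ℕ) + 1 = (b : ℕ)) :
    ibE n b * ibE n a = ibE n a * ibE n b := by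
  have hj : (a : ℕ) < n - 1 := by have := b.isLt; omega
  set j : Fin (n - 1) := ⟨(a : ℕ), hj⟩ with hjdef
  set P : (IB n)ˣ := sU j with hP
  have h1 : ibE n a * ↑P = ↑P * ibE n b := rel_e_s j a b rfl (by simp [hjdef]; omega)
  have h2 : ibE n b * ↑P = ↑P * ibE n a := rel_e_s' j a b rfl (by simp [hjdef]; omega)
  have h3 : ibE n a * ibE n b * ↑P = ibE n a * ibE n b :=
    rel_ee_s j a b rfl (by simp [hjdef]; omega)
  have h4 : (↑P : IB n) * ibE n a * ibE n b = ibE n a * ibE n b :=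
    rel_s_ee j a b rfl (by simp [hjdef]; omega)
  have hEb : (↑P⁻¹ : IB n) * (ibE n a * ↑P) = ibE n b := by rw [h1]; simp
  calc ibE n b * ibE n a = ↑P⁻¹ * (ibE n a * ↑P) * ibE n a := by rw [hEb]
    _ = ↑P⁻¹ * (ibE n a * (↑P * ibE n a)) := by simp [mul_assoc]
    _ = ↑P⁻¹ * (ibE n a * (ibE n b * ↑P)) := by rw [← h2]
    _ = ↑P⁻¹ * (ibE n a * ibE n b * ↑P) := by simp [mul_assoc]
    _ = ↑P⁻¹ * (ibE n a * ibE n b) := by rw [h3]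
    _ = ↑P⁻¹ * (↑P * ibE n a * ibE n b) := by rw [h4]
    _ = ibE n a * ibE n b := by simp [mul_assoc]

/-- All idempotents commute. -/
lemma e_e_comm : ∀ (d : ℕ) (a b : Fin n), (b : ℕ) = (a : ℕ) + d + 1 →
    ibE n a * ibE n b = ibE n b * ibE n a := by
  intro d
  induction d with
  | zero => exact fun a b hab => (e_e_adj a b (by omega)).symm
  | succ d ih =>
    intro a b hab
    have hbn : (b : ℕ) < n := b.isLt
    have hr : (b : ℕ) - 1 < n - 1 := by omega
    set r : Fin (n - 1) := ⟨(b : ℕ) - 1, hr⟩ with hrdef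
    have hb'n : (b : ℕ) - 1 < n := by omega
    set b' : Fin n := ⟨(b : ℕ) - 1, hb'n⟩ with hb'def
    set R : (IB n)ˣ := sU r with hR
    have h1 : ibE n b' * ↑R = ↑R * ibE n b := rel_e_s r b' b rfl (by simp [hrdef, hb'def]; omega)
    have h2 : ibE n a * ↑R = ↑R * ibE n a :=
      e_s_comm a r (by simp [hrdef]; omega) (by simp [hrdef]; omega)
    have h2' : ibE n a * ↑R⁻¹ = (↑R⁻¹ : IB n) * ibE n a := swap_u h2
    have ihab : ibE n a * ibE n b' = ibE n b' * ibE n a := ih a b' (by simp [hb'def]; omega)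
    have hEb : (↑R⁻¹ : IB n) * (ibE n b' * ↑R) = ibE n b := by rw [h1]; simp
    calc ibE n a * ibE n b = ibE n a * (↑R⁻¹ * (ibE n b' * ↑R)) := by rw [hEb]
      _ = ibE n a * ↑R⁻¹ * (ibE n b' * ↑R) := by simp [mul_assoc]
      _ = ↑R⁻¹ * ibE n a * (ibE n b' * ↑R) := by rw [h2']
      _ = ↑R⁻¹ * (ibE n a * ibE n b' * ↑R) := by simp [mul_assoc]
      _ = ↑R⁻¹ * (ibE n b' * ibE n a * ↑R) := by rw [ihab]
      _ = ↑R⁻¹ * (ibE n b' * (ibE n a * ↑R)) := by simp [mul_assoc]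
      _ = ↑R⁻¹ * (ibE n b' * (↑R * ibE n a)) := by rw [h2]
      _ = ↑R⁻¹ * (ibE n b' * ↑R) * ibE n a := by simp [mul_assoc]
      _ = ibE n b * ibE n a := by rw [hEb]

end IBaux
namespace IBaux

/-- Left inclusion on generators. -/
def genL (k l : ℕ) : IBGen k → IBGen (k + l)
  | .s i => .s (i.castLE (by omega))
  | .si i => .si (i.castLE (by omega))
  | .e a => .e (a.castLE (by omega))

/-- Right (shifted) inclusion on generators. -/
def genR (k l : ℕ) : IBGen l → IBGen (k + l)
  | .s j => .s ((Fin.natAdd k j).castLE (m := k + l - 1) (by have := j.isLt; omega))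
  | .si j => .si ((Fin.natAdd k j).castLE (m := k + l - 1) (by have := j.isLt; omega))
  | .e b => .e (Fin.natAdd k b)

variable {k l : ℕ}

lemma relL {x y : FreeMonoid (IBGen k)} (h : ibRel k x y) :
    ibRel (k + l) (FreeMonoid.map (genL k l) x) (FreeMonoid.map (genL k l) y) := by
  cases h with
  | braid_comm i j h =>
    simp only [map_mul, FreeMonoid.map_of, genL]
    exact ibRel.braid_comm _ _ (by simpa using h)
  | braid i j h =>
    simp only [map_mul, FreeMonoid.map_of, genL]
    exact ibRel.braid _ _ (by simpa using h)
  | inv_right i =>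
    simp only [map_mul, map_one, FreeMonoid.map_of, genL]
    exact ibRel.inv_right _
  | inv_left i =>
    simp only [map_mul, map_one, FreeMonoid.map_of, genL]
    exact ibRel.inv_left _
  | e_comm a i h =>
    simp only [map_mul, FreeMonoid.map_of, genL]
    exact ibRel.e_comm _ _ (by simpa using h)
  | e_s i a b ha hb =>
    simp only [map_mul, FreeMonoid.map_of, genL]
    exact ibRel.e_s _ _ _ (by simpa using ha) (by simpa using hb)
  | e_s' i a b ha hb =>
    simp only [map_mul, FreeMonoid.map_of, genL]
    exact ibRel.e_s' _ _ _ (by simpa using ha) (by simpa using hb)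
  | idem a =>
    simp only [map_mul, FreeMonoid.map_of, genL]
    exact ibRel.idem _
  | e_ss i b hb =>
    simp only [map_mul, FreeMonoid.map_of, genL]
    exact ibRel.e_ss _ _ (by simpa using hb)
  | ss_e i b hb =>
    simp only [map_mul, FreeMonoid.map_of, genL]
    exact ibRel.ss_e _ _ (by simpa using hb)
  | ee_s i a b ha hb =>
    simp only [map_mul, FreeMonoid.map_of, genL]
    exact ibRel.ee_s _ _ _ (by simpa using ha) (by simpa using hb)
  | s_ee i a b ha hb =>
    simp only [map_mul, FreeMonoid.map_of, genL]
    exact ibRel.s_ee _ _ _ (by simpa using ha) (by simpa using hb)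

lemma relR {x y : FreeMonoid (IBGen l)} (h : ibRel l x y) :
    ibRel (k + l) (FreeMonoid.map (genR k l) x) (FreeMonoid.map (genR k l) y) := by
  cases h with
  | braid_comm i j h =>
    simp only [map_mul, FreeMonoid.map_of, genR]
    exact ibRel.braid_comm _ _ (by simp; omega)
  | braid i j h =>
    simp only [map_mul, FreeMonoid.map_of, genR]
    exact ibRel.braid _ _ (by simp; omega)
  | inv_right i =>
    simp only [map_mul, map_one, FreeMonoid.map_of, genR]
    exact ibRel.inv_right _
  | inv_left i =>
    simp only [map_mul, map_one, FreeMonoid.map_of, genR]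
    exact ibRel.inv_left _
  | e_comm a i h =>
    simp only [map_mul, FreeMonoid.map_of, genR]
    exact ibRel.e_comm _ _ (by simp; omega)
  | e_s i a b ha hb =>
    simp only [map_mul, FreeMonoid.map_of, genR]
    exact ibRel.e_s _ _ _ (by simp; omega) (by simp; omega)
  | e_s' i a b ha hb =>
    simp only [map_mul, FreeMonoid.map_of, genR]
    exact ibRel.e_s' _ _ _ (by simp; omega) (by simp; omega)
  | idem a =>
    simp only [map_mul, FreeMonoid.map_of, genR]
    exact ibRel.idem _
  | e_ss i b hb =>
    simp only [map_mul, FreeMonoid.map_of, genR]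
    exact ibRel.e_ss _ _ (by simp; omega)
  | ss_e i b hb =>
    simp only [map_mul, FreeMonoid.map_of, genR]
    exact ibRel.ss_e _ _ (by simp; omega)
  | ee_s i a b ha hb =>
    simp only [map_mul, FreeMonoid.map_of, genR]
    exact ibRel.ee_s _ _ _ (by simp; omega) (by simp; omega)
  | s_ee i a b ha hb =>
    simp only [map_mul, FreeMonoid.map_of, genR]
    exact ibRel.s_ee _ _ _ (by simp; omega) (by simp; omega)

/-- The left inclusion `IB k →* IB (k+l)`. -/
def mapMonL (k l : ℕ) : IB k →* IB (k + l) :=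
  Con.lift _ (((ibCon (k + l)).mk').comp (FreeMonoid.map (genL k l)))
    (Con.conGen_le.mpr fun x y h =>
      (Con.ker_rel _).mpr ((Con.eq _).mpr (ConGen.Rel.of _ _ (relL h))))

/-- The right inclusion `IB l →* IB (k+l)`. -/
def mapMonR (k l : ℕ) : IB l →* IB (k + l) :=
  Con.lift _ (((ibCon (k + l)).mk').comp (FreeMonoid.map (genR k l)))
    (Con.conGen_le.mpr fun x y h =>
      (Con.ker_rel _).mpr ((Con.eq _).mpr (ConGen.Rel.of _ _ (relR h))))

lemma mapMonL_mk (x : FreeMonoid (IBGen k)) :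
    mapMonL k l ((ibCon k).mk' x) = (ibCon (k + l)).mk' (FreeMonoid.map (genL k l) x) :=
  Con.lift_mk' _ _

lemma mapMonR_mk (x : FreeMonoid (IBGen l)) :
    mapMonR k l ((ibCon l).mk' x) = (ibCon (k + l)).mk' (FreeMonoid.map (genR k l) x) :=
  Con.lift_mk' _ _

lemma comm_gen (g₁ : IBGen k) (g₂ : IBGen l) :
    Commute ((ibCon (k + l)).mk' (.of (genL k l g₁)))
      ((ibCon (k + l)).mk' (.of (genR k l g₂))) := by
  cases g₁ with
  | s i =>
    have hi := i.isLt
    cases g₂ with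
    | s j =>
      exact rel_braid_comm (n := k + l) ⟨(i : ℕ), by omega⟩ ⟨k + (j : ℕ), by have := j.isLt; omega⟩
        (by simp; omega)
    | si j =>
      exact Commute.units_inv_right (u := sU ⟨k + (j : ℕ), by have := j.isLt; omega⟩)
        (rel_braid_comm (n := k + l) ⟨(i : ℕ), by omega⟩ _ (by simp; omega))
    | e b =>
      exact (e_s_comm (n := k + l) ⟨k + (b : ℕ), by have := b.isLt; omega⟩
        ⟨(i : ℕ), by omega⟩ (by simp; omega) (by simp; omega)).symm
  | si i =>
    have hi := i.isLt
    cases g₂ with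
    | s j =>
      exact Commute.units_inv_left (u := sU ⟨(i : ℕ), by omega⟩)
        (rel_braid_comm (n := k + l) _ ⟨k + (j : ℕ), by have := j.isLt; omega⟩ (by simp; omega))
    | si j =>
      exact Commute.units_inv_left (u := sU ⟨(i : ℕ), by omega⟩)
        (Commute.units_inv_right (u := sU ⟨k + (j : ℕ), by have := j.isLt; omega⟩)
          (rel_braid_comm (n := k + l) _ _ (by simp; omega)))
    | e b =>
      exact Commute.units_inv_left (u := sU ⟨(i : ℕ), by omega⟩)
        ((e_s_comm (n := k + l) ⟨k + (b : ℕ), by have := b.isLt; omega⟩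
          _ (by simp; omega) (by simp; omega)).symm)
  | e a =>
    have ha := a.isLt
    cases g₂ with
    | s j =>
      exact e_s_comm (n := k + l) ⟨(a : ℕ), by omega⟩
        ⟨k + (j : ℕ), by have := j.isLt; omega⟩ (by simp; omega) (by simp; omega)
    | si j =>
      exact Commute.units_inv_right (u := sU ⟨k + (j : ℕ), by have := j.isLt; omega⟩)
        (e_s_comm (n := k + l) ⟨(a : ℕ), by omega⟩ _ (by simp; omega) (by simp; omega))
    | e b =>
      exact e_e_comm (k + (b : ℕ) - (a : ℕ) - 1) ⟨(a : ℕ), by omega⟩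
        ⟨k + (b : ℕ), by have := b.isLt; omega⟩ (by simp; omega)

lemma comm_gen_word (g₁ : IBGen k) (v : FreeMonoid (IBGen l)) :
    Commute ((ibCon (k + l)).mk' (.of (genL k l g₁)))
      ((ibCon (k + l)).mk' (FreeMonoid.map (genR k l) v)) := by
  induction v using FreeMonoid.inductionOn' with
  | one => simp only [map_one]; exact Commute.one_right _
  | of_mul b v ih =>
    simp only [map_mul, FreeMonoid.map_of]
    exact Commute.mul_right (comm_gen g₁ b) ih

lemma comm_word (w : FreeMonoid (IBGen k)) (v : FreeMonoid (IBGen l)) :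
    Commute ((ibCon (k + l)).mk' (FreeMonoid.map (genL k l) w))
      ((ibCon (k + l)).mk' (FreeMonoid.map (genR k l) v)) := by
  induction w using FreeMonoid.inductionOn' with
  | one => simp only [map_one]; exact Commute.one_left _
  | of_mul a w ih =>
    simp only [map_mul, FreeMonoid.map_of]
    exact Commute.mul_left (comm_gen_word a v) ih

lemma comm_main (x : IB k) (y : IB l) : Commute (mapMonL k l x) (mapMonR k l y) := by
  induction x using Con.induction_on with
  | H w =>
    induction y using Con.induction_on with
    | H v =>
      have h1 : mapMonL k l ((ibCon k).mk' w)
          = (ibCon (k + l)).mk' (FreeMonoid.map (genL k l) w) := mapMonL_mk w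
      have h2 : mapMonR k l ((ibCon l).mk' v)
          = (ibCon (k + l)).mk' (FreeMonoid.map (genR k l) v) := mapMonR_mk v
      exact h1 ▸ h2 ▸ comm_word w v

end IBaux
/-- The side-by-side pairing `μ : IB_k × IB_l → IB_{k+l}`
(`μ(σ'_i, e) = σ_i`, `μ(e, σ''_j) = σ_{j+k}`, `μ(ε'_i, e) = ε_i`,
`μ(e, ε''_j) = ε_{j+k}`) is a well-defined monoid homomorphism, and the
square formed with the standard pairing `Br_k × Br_l → Br_{k+l}` and the
canonical inclusions `κ : Br_m → IB_m` commutes. -/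
theorem ib_pairing (k l : ℕ)
    (μBr : BraidGroup k × BraidGroup l →* BraidGroup (k + l))
    (hμBr₁ : ∀ i : Fin (k - 1),
      μBr (braidGen k i, 1) = braidGen (k + l) ⟨(i : ℕ), by have := i.isLt; omega⟩)
    (hμBr₂ : ∀ j : Fin (l - 1),
      μBr (1, braidGen l j) = braidGen (k + l) ⟨k + (j : ℕ), by have := j.isLt; omega⟩)
    (κk : BraidGroup k →* IB k) (hκk : ∀ i, κk (braidGen k i) = ibS k i)
    (κl : BraidGroup l →* IB l) (hκl : ∀ j, κl (braidGen l j) = ibS l j)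
    (κkl : BraidGroup (k + l) →* IB (k + l))
    (hκkl : ∀ i, κkl (braidGen (k + l) i) = ibS (k + l) i) :
    ∃ μ : IB k × IB l →* IB (k + l),
      (∀ i : Fin (k - 1),
        μ (ibS k i, 1) = ibS (k + l) ⟨(i : ℕ), by have := i.isLt; omega⟩) ∧
      (∀ j : Fin (l - 1),
        μ (1, ibS l j) = ibS (k + l) ⟨k + (j : ℕ), by have := j.isLt; omega⟩) ∧
      (∀ a : Fin k,
        μ (ibE k a, 1) = ibE (k + l) ⟨(a : ℕ), by have := a.isLt; omega⟩) ∧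
      (∀ b : Fin l,
        μ (1, ibE l b) = ibE (k + l) ⟨k + (b : ℕ), by have := b.isLt; omega⟩) ∧
      ∀ (a : BraidGroup k) (b : BraidGroup l),
        μ (κk a, κl b) = κkl (μBr (a, b)) := by
  refine ⟨(IBaux.mapMonL k l).noncommCoprod (IBaux.mapMonR k l)
    (fun x y => IBaux.comm_main x y), ?_, ?_, ?_, ?_, ?_⟩
  · intro i
    show IBaux.mapMonL k l (ibS k i) * IBaux.mapMonR k l 1 = _
    rw [map_one, mul_one]
    exact IBaux.mapMonL_mk _
  · intro j
    show IBaux.mapMonL k l 1 * IBaux.mapMonR k l (ibS l j) = _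
    rw [map_one, one_mul]
    exact IBaux.mapMonR_mk _
  · intro a
    show IBaux.mapMonL k l (ibE k a) * IBaux.mapMonR k l 1 = _
    rw [map_one, mul_one]
    exact IBaux.mapMonL_mk _
  · intro b
    show IBaux.mapMonL k l 1 * IBaux.mapMonR k l (ibE l b) = _
    rw [map_one, one_mul]
    exact IBaux.mapMonR_mk _
  · have hLa : ∀ x : BraidGroup k, IBaux.mapMonL k l (κk x) = κkl (μBr (x, 1)) := by
      have e : ((IBaux.mapMonL k l).comp κk).toHomUnits
          = (κkl.comp (μBr.comp (MonoidHom.inl (BraidGroup k) (BraidGroup l)))).toHomUnits := by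
        apply PresentedGroup.ext
        intro y
        apply Units.ext
        show IBaux.mapMonL k l (κk (braidGen k y)) = κkl (μBr (braidGen k y, 1))
        rw [hκk, hμBr₁, hκkl]
        exact IBaux.mapMonL_mk _
      intro x
      calc IBaux.mapMonL k l (κk x) = ((IBaux.mapMonL k l).comp κk) x := rfl
        _ = ↑(((IBaux.mapMonL k l).comp κk).toHomUnits x) :=
            (MonoidHom.coe_toHomUnits _ _).symm
        _ = ↑((κkl.comp (μBr.comp (MonoidHom.inl (BraidGroup k) (BraidGroup l)))).toHomUnits x) :=
            by rw [e]
        _ = (κkl.comp (μBr.comp (MonoidHom.inl (BraidGroup k) (BraidGroup l)))) x :=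
            MonoidHom.coe_toHomUnits _ _
        _ = κkl (μBr (x, 1)) := rfl
    have hRb : ∀ y : BraidGroup l, IBaux.mapMonR k l (κl y) = κkl (μBr (1, y)) := by
      have e : ((IBaux.mapMonR k l).comp κl).toHomUnits
          = (κkl.comp (μBr.comp (MonoidHom.inr (BraidGroup k) (BraidGroup l)))).toHomUnits := by
        apply PresentedGroup.ext
        intro y
        apply Units.ext
        show IBaux.mapMonR k l (κl (braidGen l y)) = κkl (μBr (1, braidGen l y))
        rw [hκl, hμBr₂, hκkl]
        exact IBaux.mapMonR_mk _
      intro y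
      calc IBaux.mapMonR k l (κl y) = ((IBaux.mapMonR k l).comp κl) y := rfl
        _ = ↑(((IBaux.mapMonR k l).comp κl).toHomUnits y) :=
            (MonoidHom.coe_toHomUnits _ _).symm
        _ = ↑((κkl.comp (μBr.comp (MonoidHom.inr (BraidGroup k) (BraidGroup l)))).toHomUnits y) :=
            by rw [e]
        _ = (κkl.comp (μBr.comp (MonoidHom.inr (BraidGroup k) (BraidGroup l)))) y :=
            MonoidHom.coe_toHomUnits _ _
        _ = κkl (μBr (1, y)) := rfl
    intro a b
    show IBaux.mapMonL k l (κk a) * IBaux.mapMonR k l (κl b) = κkl (μBr (a, b))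
    rw [hLa, hRb, ← map_mul, ← map_mul, Prod.mk_mul_mk, mul_one, one_mul]
end
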